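/- arXiv:1802.08855 — 3 statements merged into one kernel-verified Lean document; each statement's English description precedes it below -/
import Mathlib

section
/- Let Ω be a finite set equipped, for some δ > 0, with the metric ρ(x,y) := δ·1{x ≠ y}, let r ∈ [1,∞), and let n be a positive integer with 2 ≤ |Ω| ≤ 32n. Then inf_{P̂} sup_{P} E_{X_1,…,X_n ∼ P^n}[ W_r^r(P, P̂(X_1,…,X_n)) ] ≥ (3·log 2 / 2^{r+12}) · δ^r · √((|Ω| − 1)/n), where the supremum is over all probability measures P on Ω and the infimum is over all (possibly randomized) estimators P̂ : Ω^n → {probability measures on Ω}. -/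
open MeasureTheory ENNReal

noncomputable section

/-- The set of couplings of two measures. -/
def couplings {Ω : Type*} [MeasurableSpace Ω] (P Q : Measure Ω) : Set (Measure (Ω × Ω)) :=
  {μ | μ.map Prod.fst = P ∧ μ.map Prod.snd = Q}

/-- `W_r^r(P,Q)`, the `r`-th power of the `r`-Wasserstein distance. -/
def wassersteinPow {Ω : Type*} [MeasurableSpace Ω] [PseudoEMetricSpace Ω] (r : ℝ)
    (P Q : Measure Ω) : ℝ≥0∞ :=
  ⨅ μ ∈ couplings P Q, ∫⁻ p : Ω × Ω, edist p.1 p.2 ^ r ∂μ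

/-- The `r`-Wasserstein distance. -/
def wasserstein {Ω : Type*} [MeasurableSpace Ω] [PseudoEMetricSpace Ω] (r : ℝ)
    (P Q : Measure Ω) : ℝ≥0∞ :=
  (wassersteinPow r P Q) ^ (1 / r)

/-- The empirical measure of `n` samples. -/
def empiricalMeasure {Ω : Type*} [MeasurableSpace Ω] (n : ℕ) (x : Fin n → Ω) : Measure Ω :=
  (n : ℝ≥0∞)⁻¹ • ∑ i : Fin n, Measure.dirac (x i)

/-- `𝒮` is a countable-or-not Borel partition of the set `B`. -/
def IsBorelPartitionOf {Ω : Type*} [MeasurableSpace Ω] (𝒮 : Set (Set Ω)) (B : Set Ω) : Prop :=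
  (∀ S ∈ 𝒮, MeasurableSet S) ∧ ⋃₀ 𝒮 = B ∧ 𝒮.PairwiseDisjoint id

/-- The resolution of a partition: the largest diameter of any of its elements. -/
def partRes {Ω : Type*} [PseudoEMetricSpace Ω] (𝒮 : Set (Set Ω)) : ℝ≥0∞ :=
  ⨆ S ∈ 𝒮, EMetric.diam S

/-- The `ε`-covering number of a Borel set `B`: the minimal cardinality of a countable
Borel partition of `B` all of whose elements have diameter at most `ε`. -/
def coveringNumber {Ω : Type*} [MeasurableSpace Ω] [PseudoEMetricSpace Ω]
    (B : Set Ω) (ε : ℝ) : ℝ≥0∞ :=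
  ⨅ (𝒮 : Set (Set Ω)) (_ : IsBorelPartitionOf 𝒮 B ∧ 𝒮.Countable ∧
      ∀ S ∈ 𝒮, EMetric.diam S ≤ ENNReal.ofReal ε), (𝒮.encard : ℝ≥0∞)

/-- The separation of a set: the smallest distance between distinct points. -/
def eSep {Ω : Type*} [PseudoEMetricSpace Ω] (S : Set Ω) : ℝ≥0∞ :=
  ⨅ (x ∈ S) (y ∈ S) (_ : x ≠ y), edist x y

/-- `|a - b|` for extended nonnegative reals. -/
def ennrDiff (a b : ℝ≥0∞) : ℝ≥0∞ := (a - b) + (b - a)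

/-- The `ℓ`-th metric moment of `P` about `x₀`. -/
def metricMoment {Ω : Type*} [MeasurableSpace Ω] [PseudoEMetricSpace Ω]
    (P : Measure Ω) (x₀ : Ω) (ℓ : ℝ) : ℝ≥0∞ :=
  (∫⁻ y, edist x₀ y ^ ℓ ∂P) ^ (1 / ℓ)

end


namespace Stmt11

variable {Ω : Type*} [Fintype Ω] [DecidableEq Ω]

/-- weight of point `(j,b)` under sign pattern `θ`. -/
noncomputable def wgt (m : ℕ) (ε : ℝ) (θ : Fin m → Bool) (p : Fin m × Bool) : ℝ :=
  (1 + (if θ p.1 = p.2 then ε else -ε)) / (2 * m)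

noncomputable def qfun {m : ℕ} (pt : Fin m × Bool → Ω) (ε : ℝ) (θ : Fin m → Bool) (ω : Ω) : ℝ :=
  ∑ p : Fin m × Bool, if pt p = ω then wgt m ε θ p else 0

variable {m : ℕ} (pt : Fin m × Bool → Ω) (ε : ℝ)

lemma wgt_nonneg (hε0 : 0 ≤ ε) (hε1 : ε ≤ 1) (θ : Fin m → Bool) (p : Fin m × Bool) :
    0 ≤ wgt m ε θ p := by
  unfold wgt
  have : -ε ≤ (if θ p.1 = p.2 then ε else -ε) := by split <;> linarith
  have h2 : (0:ℝ) ≤ 2 * m := by positivity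
  have : (0:ℝ) ≤ 1 + (if θ p.1 = p.2 then ε else -ε) := by linarith
  positivity

lemma wgt_pair_sum (hm : 0 < m) (θ : Fin m → Bool) (j : Fin m) :
    wgt m ε θ (j, true) + wgt m ε θ (j, false) = 1 / m := by
  have hm' : (m:ℝ) ≠ 0 := Nat.cast_ne_zero.mpr hm.ne'
  have key : ∀ s : ℝ, (1 + s)/(2*(m:ℝ)) + (1 + -s)/(2*m) = 1/m := by
    intro s
    rw [← add_div, div_eq_div_iff (by positivity) (by positivity)]
    ring
  unfold wgt
  rcases Bool.eq_false_or_eq_true (θ j) with h | h <;> simp only [h] <;>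
    simp only [if_pos, if_neg, Bool.true_eq_false, Bool.false_eq_true, if_true, if_false, reduceIte]
  · exact key ε
  · have := key (-ε); rw [neg_neg] at this; exact this

lemma wgt_pair_diff (hm : 0 < m) (θ : Fin m → Bool) (j : Fin m) :
    wgt m ε θ (j, true) - wgt m ε θ (j, false) = (if θ j then ε/m else -(ε/m)) := by
  have hm' : (m:ℝ) ≠ 0 := Nat.cast_ne_zero.mpr hm.ne'
  have key : ∀ s : ℝ, (1 + s)/(2*(m:ℝ)) - (1 + -s)/(2*m) = s/m := by
    intro s
    rw [div_sub_div_same, div_eq_div_iff (by positivity) (by positivity)]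
    ring
  unfold wgt
  rcases Bool.eq_false_or_eq_true (θ j) with h | h <;> simp only [h] <;>
    simp only [if_pos, if_neg, Bool.true_eq_false, Bool.false_eq_true, if_true, if_false,
      reduceIte]
  · exact key ε
  · have h2 := key (-ε)
    rw [neg_neg] at h2
    rw [h2, neg_div]

lemma wgt_total (hm : 0 < m) (θ : Fin m → Bool) : ∑ p : Fin m × Bool, wgt m ε θ p = 1 := by
  have hm' : (m:ℝ) ≠ 0 := Nat.cast_ne_zero.mpr hm.ne'
  rw [Fintype.sum_prod_type]
  have : ∀ j : Fin m, ∑ b, wgt m ε θ (j, b) = 1 / m := by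
    intro j
    rw [Fintype.sum_bool]
    exact wgt_pair_sum ε hm θ j
  rw [Finset.sum_congr rfl fun j _ => this j]
  simp [Finset.sum_const]
  field_simp

lemma qfun_apply (hpt : Function.Injective pt) (θ : Fin m → Bool) (p : Fin m × Bool) :
    qfun pt ε θ (pt p) = wgt m ε θ p := by
  unfold qfun
  rw [Finset.sum_eq_single p]
  · simp
  · intro p' _ hne
    rw [if_neg (fun h => hne (hpt h))]
  · intro h; exact absurd (Finset.mem_univ p) h

lemma qfun_eq_zero (θ : Fin m → Bool) (ω : Ω) (hω : ω ∉ Finset.univ.image pt) :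
    qfun pt ε θ ω = 0 := by
  unfold qfun
  refine Finset.sum_eq_zero fun p _ => ?_
  rw [if_neg]
  intro h
  exact hω (Finset.mem_image.mpr ⟨p, Finset.mem_univ p, h⟩)

lemma qfun_nonneg (hε0 : 0 ≤ ε) (hε1 : ε ≤ 1) (θ : Fin m → Bool) (ω : Ω) :
    0 ≤ qfun pt ε θ ω := by
  refine Finset.sum_nonneg fun p _ => ?_
  split
  · exact wgt_nonneg ε hε0 hε1 θ p
  · exact le_refl 0

lemma qfun_total (hm : 0 < m) (θ : Fin m → Bool) : ∑ ω : Ω, qfun pt ε θ ω = 1 := by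
  unfold qfun
  rw [Finset.sum_comm]
  rw [Finset.sum_congr rfl fun p _ => Finset.sum_ite_eq (Finset.univ : Finset Ω) (pt p)
    (fun _ => wgt m ε θ p)]
  simp [wgt_total ε hm θ]

lemma sqrt_prod' {ι : Type*} (s : Finset ι) (f : ι → ℝ) (hf : ∀ i ∈ s, 0 ≤ f i) :
    Real.sqrt (∏ i ∈ s, f i) = ∏ i ∈ s, Real.sqrt (f i) := by
  induction s using Finset.cons_induction with
  | empty => simp
  | cons a s ha ih =>
      rw [Finset.prod_cons, Finset.prod_cons, Real.sqrt_mul (hf a (Finset.mem_cons_self a s)),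
        ih fun i hi => hf i (Finset.mem_cons_of_mem hi)]

lemma sum_prod_pow {n : ℕ} (g : Ω → ℝ) :
    ∑ x : Fin n → Ω, ∏ i, g (x i) = (∑ ω, g ω) ^ n := by
  calc ∑ x : Fin n → Ω, ∏ i, g (x i)
      = ∑ x ∈ Fintype.piFinset (fun _ : Fin n => (Finset.univ : Finset Ω)), ∏ i, g (x i) := by
        rw [Fintype.piFinset_univ]
    _ = ∏ _i : Fin n, ∑ ω, g ω := (Finset.prod_univ_sum _ _).symm
    _ = (∑ ω, g ω) ^ n := by rw [Finset.prod_const, Finset.card_univ, Fintype.card_fin]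

def bflip {m : ℕ} (j : Fin m) (θ : Fin m → Bool) : Fin m → Bool := Function.update θ j (!θ j)

lemma bflip_invol {m : ℕ} (j : Fin m) : Function.Involutive (bflip j) := by
  intro θ
  funext i
  by_cases h : i = j
  · subst h; simp [bflip]
  · simp [bflip, Function.update_of_ne h]

lemma bflip_self {m : ℕ} (j : Fin m) (θ : Fin m → Bool) : bflip j θ j = !θ j := by
  simp [bflip]

lemma bflip_ne {m : ℕ} {j i : Fin m} (θ : Fin m → Bool) (h : i ≠ j) : bflip j θ i = θ i := by
  simp [bflip, Function.update_of_ne h]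

lemma wgt_bflip_ne {m : ℕ} {j : Fin m} (ε : ℝ) (θ : Fin m → Bool) (p : Fin m × Bool)
    (h : p.1 ≠ j) : wgt m ε (bflip j θ) p = wgt m ε θ p := by
  unfold wgt
  rw [bflip_ne θ h]

lemma bc_one (hm : 0 < m) (hpt : Function.Injective pt) (hε0 : 0 ≤ ε) (hε1 : ε ≤ 1)
    (θ : Fin m → Bool) (j : Fin m) :
    ∑ ω, Real.sqrt (qfun pt ε θ ω * qfun pt ε (bflip j θ) ω)
      = 1 - 1/m + Real.sqrt (1 - ε^2)/m := by
  have hm' : (m:ℝ) ≠ 0 := Nat.cast_ne_zero.mpr hm.ne'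
  set θ' := bflip j θ with hθ'
  have h1 : ∑ ω, Real.sqrt (qfun pt ε θ ω * qfun pt ε θ' ω)
      = ∑ ω ∈ Finset.univ.image pt, Real.sqrt (qfun pt ε θ ω * qfun pt ε θ' ω) := by
    refine (Finset.sum_subset (Finset.subset_univ _) fun ω _ hω => ?_).symm
    rw [qfun_eq_zero pt ε θ ω hω, zero_mul, Real.sqrt_zero]
  have h2 : ∑ ω ∈ Finset.univ.image pt, Real.sqrt (qfun pt ε θ ω * qfun pt ε θ' ω)
      = ∑ p : Fin m × Bool, Real.sqrt (wgt m ε θ p * wgt m ε θ' p) := by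
    rw [Finset.sum_image fun a _ b _ h => hpt h]
    exact Finset.sum_congr rfl fun p _ => by
      rw [qfun_apply pt ε hpt θ p, qfun_apply pt ε hpt θ' p]
  rw [h1, h2, Fintype.sum_prod_type]
  rw [← Finset.add_sum_erase Finset.univ _ (Finset.mem_univ j)]
  have hrest : ∑ j' ∈ Finset.univ.erase j, ∑ b, Real.sqrt (wgt m ε θ (j', b) * wgt m ε θ' (j', b))
      = 1 - 1/m := by
    have : ∀ j' ∈ Finset.univ.erase j, ∑ b, Real.sqrt (wgt m ε θ (j', b) * wgt m ε θ' (j', b))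
        = 1/m := by
      intro j' hj'
      have hne : j' ≠ j := Finset.ne_of_mem_erase hj'
      have : ∀ b, Real.sqrt (wgt m ε θ (j', b) * wgt m ε θ' (j', b)) = wgt m ε θ (j', b) := by
        intro b
        rw [hθ', wgt_bflip_ne ε θ (j', b) hne,
          Real.sqrt_mul_self (wgt_nonneg ε hε0 hε1 θ (j', b))]
      rw [Fintype.sum_bool, this true, this false]
      exact wgt_pair_sum ε hm θ j'
    rw [Finset.sum_congr rfl this, Finset.sum_const, Finset.card_erase_of_mem (Finset.mem_univ j)]
    simp only [Finset.card_univ, Fintype.card_fin, nsmul_eq_mul]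
    rw [Nat.cast_sub hm]
    field_simp
    simp
  have hj : ∑ b, Real.sqrt (wgt m ε θ (j, b) * wgt m ε θ' (j, b)) = Real.sqrt (1 - ε^2)/m := by
    have hprod : ∀ b, wgt m ε θ (j, b) * wgt m ε θ' (j, b) = (1 - ε^2)/(2*m)^2 := by
      intro b
      have hj' : θ' j = !θ j := bflip_self j θ
      cases hb : θ j <;> cases b <;> simp [wgt, hj', hb] <;> ring
    have hsq : Real.sqrt ((1 - ε^2)/(2*m)^2) = Real.sqrt (1 - ε^2)/(2*m) := by
      rw [Real.sqrt_div (by nlinarith : (0:ℝ) ≤ 1 - ε^2), Real.sqrt_sq (by positivity)]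
    rw [Fintype.sum_bool, hprod true, hprod false, hsq]
    field_simp
    ring
  rw [hrest, hj]
  ring

lemma bcn {n : ℕ} (hm : 0 < m) (hn : 0 < n) (hpt : Function.Injective pt)
    (hε0 : 0 ≤ ε) (hε1 : ε ≤ 1) (hε2 : ε^2 * (4*n) ≤ m) (θ : Fin m → Bool) (j : Fin m) :
    (3/4 : ℝ) ≤ ∑ x : Fin n → Ω,
      Real.sqrt ((∏ i, qfun pt ε θ (x i)) * ∏ i, qfun pt ε (bflip j θ) (x i)) := by
  have hm' : (0:ℝ) < m := by exact_mod_cast hm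
  have hn' : (0:ℝ) < n := by exact_mod_cast hn
  set θ' := bflip j θ with hθ'
  have hpw : ∀ x : Fin n → Ω, Real.sqrt ((∏ i, qfun pt ε θ (x i)) * ∏ i, qfun pt ε θ' (x i))
      = ∏ i, Real.sqrt (qfun pt ε θ (x i) * qfun pt ε θ' (x i)) := by
    intro x
    rw [← Finset.prod_mul_distrib]
    exact sqrt_prod' _ _ fun i _ =>
      mul_nonneg (qfun_nonneg pt ε hε0 hε1 θ _) (qfun_nonneg pt ε hε0 hε1 θ' _)
  rw [Finset.sum_congr rfl fun x _ => hpw x,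
    sum_prod_pow (fun ω => Real.sqrt (qfun pt ε θ ω * qfun pt ε θ' ω))]
  have hbase : 1 - 1/(4*(n:ℝ)) ≤ ∑ ω, Real.sqrt (qfun pt ε θ ω * qfun pt ε θ' ω) := by
    rw [hθ', bc_one pt ε hm hpt hε0 hε1 θ j]
    have hs : 1 - ε^2 ≤ Real.sqrt (1 - ε^2) := by
      have h01 : (0:ℝ) ≤ 1 - ε^2 := by nlinarith
      have h11 : Real.sqrt (1 - ε^2) ≤ 1 := by
        have h := Real.sqrt_le_sqrt (show 1 - ε^2 ≤ 1 by nlinarith)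
        rwa [Real.sqrt_one] at h
      nlinarith [Real.sq_sqrt h01, Real.sqrt_nonneg (1 - ε^2)]
    have hεm : ε^2/m ≤ 1/(4*n) := by
      rw [div_le_div_iff₀ hm' (by positivity)]
      linarith
    have hdiv : (1 - ε^2)/(m:ℝ) ≤ Real.sqrt (1 - ε^2)/m := (div_le_div_iff_of_pos_right hm').mpr hs
    have hsplit : 1 - ε^2/(m:ℝ) = 1 - 1/m + (1 - ε^2)/m := by field_simp; ring
    linarith [hεm, hdiv, hsplit]
  have hn1 : (1:ℝ) ≤ n := by exact_mod_cast hn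
  have h4 : 1/(4*(n:ℝ)) ≤ 1/4 := one_div_le_one_div_of_le (by norm_num) (by nlinarith)
  have h40 : (0:ℝ) < 1/(4*(n:ℝ)) := by positivity
  calc (3/4 : ℝ) = 1 + n * (-(1/(4*n))) := by field_simp; ring
    _ ≤ (1 + (-(1/(4*n))))^n := one_add_mul_le_pow (by linarith) n
    _ = (1 - 1/(4*n))^n := by ring_nf
    _ ≤ _ := pow_le_pow_left₀ (by linarith) hbase n


lemma lecam {ι : Type*} [Fintype ι] (f g : ι → ℝ) (hf : ∀ i, 0 ≤ f i) (hg : ∀ i, 0 ≤ g i)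
    (hf1 : ∑ i, f i ≤ 1) (hg1 : ∑ i, g i ≤ 1) :
    (∑ i, Real.sqrt (f i * g i)) ^ 2 / 2 ≤ ∑ i, min (f i) (g i) := by
  have key : (∑ i, Real.sqrt (f i * g i)) ^ 2
      ≤ (∑ i, min (f i) (g i)) * (∑ i, max (f i) (g i)) := by
    have h := Finset.sum_mul_sq_le_sq_mul_sq Finset.univ
      (fun i => Real.sqrt (min (f i) (g i))) (fun i => Real.sqrt (max (f i) (g i)))
    have e1 : ∀ i : ι, Real.sqrt (min (f i) (g i)) * Real.sqrt (max (f i) (g i))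
        = Real.sqrt (f i * g i) := by
      intro i
      rw [← Real.sqrt_mul (le_min (hf i) (hg i)), min_mul_max]
    have e2 : ∀ i : ι, Real.sqrt (min (f i) (g i)) ^ 2 = min (f i) (g i) := fun i =>
      Real.sq_sqrt (le_min (hf i) (hg i))
    have e3 : ∀ i : ι, Real.sqrt (max (f i) (g i)) ^ 2 = max (f i) (g i) := fun i =>
      Real.sq_sqrt (le_max_of_le_left (hf i))
    simp only [e1, e2, e3] at h
    exact h
  have hmax : ∑ i, max (f i) (g i) ≤ 2 := by
    calc ∑ i, max (f i) (g i) ≤ ∑ i, (f i + g i) := by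
          refine Finset.sum_le_sum fun i _ => ?_
          exact max_le (by linarith [hg i]) (by linarith [hf i])
      _ ≤ 2 := by rw [Finset.sum_add_distrib]; linarith
  have hmin0 : (0:ℝ) ≤ ∑ i, min (f i) (g i) :=
    Finset.sum_nonneg fun i _ => le_min (hf i) (hg i)
  nlinarith [key, hmax, hmin0]

lemma testing_lb {X : Type*} [Fintype X] (t : X → Bool) (P₀ P₁ : X → ℝ)
    (h0 : ∀ x, 0 ≤ P₀ x) (h1 : ∀ x, 0 ≤ P₁ x)
    (hs0 : ∑ x, P₀ x ≤ 1) (hs1 : ∑ x, P₁ x ≤ 1)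
    (hbc : 3/4 ≤ ∑ x, Real.sqrt (P₀ x * P₁ x)) :
    9/32 ≤ (∑ x, (if t x then 0 else P₀ x)) + ∑ x, (if t x then P₁ x else 0) := by
  have h := lecam P₀ P₁ h0 h1 hs0 hs1
  have hb2 : (9:ℝ)/32 ≤ (∑ x, Real.sqrt (P₀ x * P₁ x)) ^ 2 / 2 := by nlinarith
  refine le_trans hb2 (le_trans h ?_)
  rw [← Finset.sum_add_distrib]
  refine Finset.sum_le_sum fun x _ => ?_
  rcases Bool.eq_false_or_eq_true (t x) with hx | hx <;> simp [hx, min_le_left, min_le_right]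

lemma halfL1_lb {m : ℕ} (pt : Fin m × Bool → Ω)
    (hpt : Function.Injective pt)
    (p q : Ω → ℝ)
    (hp1 : ∑ ω, p ω = 1) (hq1 : ∑ ω, q ω = 1)
    (e : Fin m → ℝ)
    (he : ∀ j, e j ≤ |(p (pt (j, true)) - p (pt (j, false)))
      - (q (pt (j, true)) - q (pt (j, false)))|) :
    (∑ j, e j) / 2 ≤ ∑ ω, max (p ω - q ω) 0 := by
  have habs : ∑ ω, |p ω - q ω| = 2 * ∑ ω, max (p ω - q ω) 0 := by
    have : ∀ ω, |p ω - q ω| = 2 * max (p ω - q ω) 0 - (p ω - q ω) := by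
      intro ω; rcases le_total (p ω) (q ω) with h | h
      · rw [abs_of_nonpos (by linarith), max_eq_right (by linarith)]; ring
      · rw [abs_of_nonneg (by linarith), max_eq_left (by linarith)]; ring
    simp only [this]
    rw [Finset.sum_sub_distrib, Finset.sum_sub_distrib, hp1, hq1, ← Finset.mul_sum]
    ring
  have himg : ∑ j, e j ≤ ∑ ω, |p ω - q ω| := by
    have step1 : ∑ j, e j ≤ ∑ pr : Fin m × Bool, |p (pt pr) - q (pt pr)| := by
      rw [Fintype.sum_prod_type]
      refine Finset.sum_le_sum fun j _ => ?_
      have hb : ∑ b, |p (pt (j, b)) - q (pt (j, b))|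
          = |p (pt (j, true)) - q (pt (j, true))| + |p (pt (j, false)) - q (pt (j, false))| := by
        simp [Fintype.sum_bool]
      rw [hb]
      refine le_trans (he j) ?_
      calc |(p (pt (j, true)) - p (pt (j, false))) - (q (pt (j, true)) - q (pt (j, false)))|
          = |(p (pt (j, true)) - q (pt (j, true))) - (p (pt (j, false)) - q (pt (j, false)))| := by
            ring_nf
        _ ≤ _ := abs_sub _ _
    have step2 : ∑ pr : Fin m × Bool, |p (pt pr) - q (pt pr)|
        = ∑ ω ∈ Finset.univ.image pt, |p ω - q ω| := by
      rw [Finset.sum_image fun a _ b _ h => hpt h]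
    have step3 : ∑ ω ∈ Finset.univ.image pt, |p ω - q ω| ≤ ∑ ω, |p ω - q ω| :=
      Finset.sum_le_sum_of_subset_of_nonneg (Finset.subset_univ _)
        fun ω _ _ => abs_nonneg _
    exact step1.trans (step2 ▸ step3)
  linarith

lemma pn_total {n : ℕ} (hm : 0 < m) (θ : Fin m → Bool) :
    ∑ x : Fin n → Ω, ∏ i, qfun pt ε θ (x i) = 1 := by
  rw [sum_prod_pow (fun ω => qfun pt ε θ ω), qfun_total pt ε hm θ, one_pow]

lemma bayes_lb {n : ℕ} (hm : 0 < m) (hn : 0 < n)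
    (hpt : Function.Injective pt)
    (hε0 : 0 ≤ ε) (hε1 : ε ≤ 1) (hε2 : ε^2 * (4*n) ≤ m)
    (t : (Fin n → Ω) → Fin m → Bool) :
    (2:ℝ)^m * ((m:ℝ) * (9/64)) ≤ ∑ θ : Fin m → Bool, ∑ x : Fin n → Ω,
      (∑ j, if t x j = θ j then (0:ℝ) else 1) * ∏ i, qfun pt ε θ (x i) := by
  have hswap : ∑ θ : Fin m → Bool, ∑ x : Fin n → Ω,
      (∑ j, if t x j = θ j then (0:ℝ) else 1) * ∏ i, qfun pt ε θ (x i)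
      = ∑ j : Fin m, ∑ θ : Fin m → Bool, ∑ x : Fin n → Ω,
        (if t x j = θ j then (0:ℝ) else ∏ i, qfun pt ε θ (x i)) := by
    have h1 : ∀ θ : Fin m → Bool, ∀ x : Fin n → Ω,
        (∑ j, if t x j = θ j then (0:ℝ) else 1) * ∏ i, qfun pt ε θ (x i)
        = ∑ j, (if t x j = θ j then (0:ℝ) else ∏ i, qfun pt ε θ (x i)) := by
      intro θ x
      rw [Finset.sum_mul]
      refine Finset.sum_congr rfl fun j _ => ?_
      split <;> simp
    simp only [h1]
    rw [Finset.sum_congr rfl fun θ _ => Finset.sum_comm, Finset.sum_comm]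
  rw [hswap]
  have hper : ∀ j : Fin m, (2:ℝ)^m * (9/64) ≤ ∑ θ : Fin m → Bool, ∑ x : Fin n → Ω,
      (if t x j = θ j then (0:ℝ) else ∏ i, qfun pt ε θ (x i)) := by
    intro j
    set F : (Fin m → Bool) → ℝ :=
      fun θ => ∑ x : Fin n → Ω, (if t x j = θ j then (0:ℝ) else ∏ i, qfun pt ε θ (x i)) with hF
    have hflip : ∑ θ, F (bflip j θ) = ∑ θ, F θ :=
      Equiv.sum_comp (Function.Involutive.toPerm _ (bflip_invol j)) F
    have hpair : ∀ θ, (9:ℝ)/32 ≤ F θ + F (bflip j θ) := by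
      intro θ
      have h := testing_lb (fun x => t x j == θ j)
        (fun x => ∏ i, qfun pt ε θ (x i)) (fun x => ∏ i, qfun pt ε (bflip j θ) (x i))
        (fun x => Finset.prod_nonneg fun i _ => qfun_nonneg pt ε hε0 hε1 θ (x i))
        (fun x => Finset.prod_nonneg fun i _ => qfun_nonneg pt ε hε0 hε1 _ (x i))
        (le_of_eq (pn_total pt ε hm θ)) (le_of_eq (pn_total pt ε hm _))
        (bcn pt ε hm hn hpt hε0 hε1 hε2 θ j)
      have e1 : F θ = ∑ x : Fin n → Ω,
          (if (t x j == θ j : Bool) then (0:ℝ) else ∏ i, qfun pt ε θ (x i)) := by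
        refine Finset.sum_congr rfl fun x _ => ?_
        by_cases hc : t x j = θ j <;> simp [hc]
      have e2 : F (bflip j θ) = ∑ x : Fin n → Ω,
          (if (t x j == θ j : Bool) then (∏ i, qfun pt ε (bflip j θ) (x i)) else 0) := by
        refine Finset.sum_congr rfl fun x _ => ?_
        have hb : (bflip j θ) j = !θ j := bflip_self j θ
        by_cases hc : t x j = θ j
        · have hne : ¬ (t x j = !θ j) := by simp [hc]
          simp [hb, hne, hc]
        · have heq : t x j = !θ j := by
            cases hc1 : t x j <;> cases hd : θ j <;> simp_all
          simp [hb, heq, hc]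
      rw [e1, e2]
      exact h
    have hc2 : (Finset.univ : Finset (Fin m → Bool)).card = 2^m := by
      simp [Finset.card_univ]
    have hsumc : (2:ℝ)^m * (9/32) ≤ 2 * ∑ θ, F θ := by
      calc (2:ℝ)^m * (9/32) = ∑ _θ : Fin m → Bool, (9/32:ℝ) := by
            rw [Finset.sum_const, hc2, nsmul_eq_mul]; push_cast; ring
        _ ≤ ∑ θ, (F θ + F (bflip j θ)) := Finset.sum_le_sum fun θ _ => hpair θ
        _ = 2 * ∑ θ, F θ := by rw [Finset.sum_add_distrib, hflip]; ring
    linarith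
  calc (2:ℝ)^m * ((m:ℝ) * (9/64)) = ∑ _j : Fin m, (2:ℝ)^m * (9/64) := by
        rw [Finset.sum_const, Finset.card_univ, Fintype.card_fin, nsmul_eq_mul]; ring
    _ ≤ _ := Finset.sum_le_sum fun j _ => hper j


lemma max_sub_min' (p q : ℝ) : p - min p q = max (p - q) 0 := by
  rcases le_total p q with h | h
  · simp [min_eq_left h, max_eq_right (by linarith : p - q ≤ 0)]
  · simp [min_eq_right h, max_eq_left (by linarith : 0 ≤ p - q)]

variable {Ω : Type*} [Fintype Ω] [MetricSpace Ω] [MeasurableSpace Ω] [BorelSpace Ω]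

lemma sum_singleton_measure [MeasurableSingletonClass Ω] (P : Measure Ω) :
    ∑ ω : Ω, P {ω} = P Set.univ := by
  rw [← MeasureTheory.lintegral_one, MeasureTheory.lintegral_fintype]
  simp

lemma wp_lb [MeasurableSingletonClass Ω]
    (δ : ℝ) (hδ : 0 < δ) (hρ : ∀ x y : Ω, x ≠ y → dist x y = δ)
    (r : ℝ) (hr : 1 ≤ r)
    (P Q : Measure Ω) [IsProbabilityMeasure P] [IsProbabilityMeasure Q]
    (c : ℝ)
    (hTV : c ≤ ∑ ω, max ((P {ω}).toReal - (Q {ω}).toReal) 0) :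
    ENNReal.ofReal (δ ^ r * c) ≤ wassersteinPow r P Q := by
  classical
  have hAll : ∀ s : Set Ω, MeasurableSet s := fun s => s.toFinite.measurableSet
  have hAll2 : ∀ s : Set (Ω × Ω), MeasurableSet s := fun s => s.toFinite.measurableSet
  rw [wassersteinPow]
  refine le_iInf₂ fun μ hμ => ?_
  obtain ⟨hfst, hsnd⟩ := hμ
  have hμuniv : μ Set.univ = 1 := by
    have h := congrArg (fun ν : Measure Ω => ν Set.univ) hfst
    simp only [Measure.map_apply measurable_fst MeasurableSet.univ, Set.preimage_univ] at h
    rw [h]; exact measure_univ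
  haveI hμprob : IsProbabilityMeasure μ := ⟨hμuniv⟩
  set Diag : Set (Ω × Ω) := {p : Ω × Ω | p.1 = p.2} with hDiag
  -- diagonal mass bound
  have hdiagle : μ Diag ≤ ∑ ω : Ω, min (P {ω}) (Q {ω}) := by
    have hsub : Diag ⊆ ⋃ ω ∈ (Finset.univ : Finset Ω), ({(ω, ω)} : Set (Ω × Ω)) := by
      rintro ⟨a, b⟩ hab
      obtain rfl : a = b := hab
      simp only [Set.mem_iUnion]
      exact ⟨a, Finset.mem_univ a, rfl⟩
    refine le_trans (measure_mono hsub) (le_trans (measure_biUnion_finset_le _ _) ?_)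
    refine Finset.sum_le_sum fun ω _ => le_min ?_ ?_
    · have h1 : ({(ω, ω)} : Set (Ω × Ω)) ⊆ Prod.fst ⁻¹' {ω} := by
        rintro ⟨a, b⟩ h; simp_all
      calc μ {(ω, ω)} ≤ μ (Prod.fst ⁻¹' {ω}) := measure_mono h1
        _ = P {ω} := by rw [← Measure.map_apply measurable_fst (hAll _), hfst]
    · have h1 : ({(ω, ω)} : Set (Ω × Ω)) ⊆ Prod.snd ⁻¹' {ω} := by
        rintro ⟨a, b⟩ h; simp_all
      calc μ {(ω, ω)} ≤ μ (Prod.snd ⁻¹' {ω}) := measure_mono h1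
        _ = Q {ω} := by rw [← Measure.map_apply measurable_snd (hAll _), hsnd]
  -- convert to reals
  have hPω : ∀ ω, P {ω} = ENNReal.ofReal (P {ω}).toReal := fun ω =>
    (ENNReal.ofReal_toReal (measure_ne_top P _)).symm
  have hQω : ∀ ω, Q {ω} = ENNReal.ofReal (Q {ω}).toReal := fun ω =>
    (ENNReal.ofReal_toReal (measure_ne_top Q _)).symm
  have hminR : ∑ ω : Ω, min (P {ω}) (Q {ω})
      = ENNReal.ofReal (∑ ω : Ω, min (P {ω}).toReal (Q {ω}).toReal) := by
    rw [ENNReal.ofReal_sum_of_nonneg fun ω _ => le_min toReal_nonneg toReal_nonneg]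
    refine Finset.sum_congr rfl fun ω _ => ?_
    rcases le_total ((P {ω}).toReal) ((Q {ω}).toReal) with h | h
    · rw [min_eq_left h, min_eq_left, ← hPω]
      rw [hPω ω, hQω ω]; exact ENNReal.ofReal_le_ofReal h
    · rw [min_eq_right h, min_eq_right, ← hQω]
      rw [hPω ω, hQω ω]; exact ENNReal.ofReal_le_ofReal h
  -- sum of P singletons equals 1
  have hPsum : ∑ ω : Ω, (P {ω}).toReal = 1 := by
    have := sum_singleton_measure P
    rw [measure_univ] at this
    have := congrArg ENNReal.toReal this
    rwa [ENNReal.toReal_sum fun ω _ => measure_ne_top P _] at this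
  -- off-diagonal mass lower bound
  have hoff : ENNReal.ofReal c ≤ μ Diagᶜ := by
    have h1 : μ Diagᶜ = 1 - μ Diag := by
      rw [measure_compl (hAll2 _) (measure_ne_top μ _), hμuniv]
    rw [h1]
    calc ENNReal.ofReal c
        ≤ ENNReal.ofReal (∑ ω, max ((P {ω}).toReal - (Q {ω}).toReal) 0) :=
          ENNReal.ofReal_le_ofReal hTV
      _ = ENNReal.ofReal (1 - ∑ ω : Ω, min (P {ω}).toReal (Q {ω}).toReal) := by
          congr 1
          rw [← hPsum, ← Finset.sum_sub_distrib]
          exact Finset.sum_congr rfl fun ω _ => (max_sub_min' _ _).symm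
      _ = 1 - ENNReal.ofReal (∑ ω : Ω, min (P {ω}).toReal (Q {ω}).toReal) := by
          rw [ENNReal.ofReal_sub _ (Finset.sum_nonneg fun ω _ => le_min toReal_nonneg
            toReal_nonneg), ENNReal.ofReal_one]
      _ ≤ 1 - μ Diag := by
          exact tsub_le_tsub le_rfl (hminR ▸ hdiagle)
  -- integral lower bound
  calc ENNReal.ofReal (δ ^ r * c) = ENNReal.ofReal (δ ^ r) * ENNReal.ofReal c := by
        rw [ENNReal.ofReal_mul (Real.rpow_nonneg hδ.le r)]
    _ ≤ ENNReal.ofReal (δ ^ r) * μ Diagᶜ := by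
        exact mul_le_mul_right hoff _
    _ = ∫⁻ p in Diagᶜ, ENNReal.ofReal (δ ^ r) ∂μ := by
        rw [MeasureTheory.setLIntegral_const, mul_comm]
    _ = ∫⁻ p in Diagᶜ, edist p.1 p.2 ^ r ∂μ := by
        refine (MeasureTheory.setLIntegral_congr_fun (hAll2 _) ?_).symm
        refine fun p hp => show edist p.1 p.2 ^ r = ENNReal.ofReal (δ ^ r) from ?_
        have hne : p.1 ≠ p.2 := hp
        rw [edist_dist, hρ _ _ hne, ← ENNReal.ofReal_rpow_of_pos hδ]
    _ ≤ ∫⁻ p, edist p.1 p.2 ^ r ∂μ :=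
        MeasureTheory.lintegral_mono' Measure.restrict_le_self le_rfl


end Stmt11

set_option maxHeartbeats 1600000 in
/-- Example 1 (lower bound): minimax lower bound on a finite space with the scaled
discrete metric `ρ(x,y) = δ·1{x ≠ y}`. -/
theorem stmt_11 {Ω : Type*} [Fintype Ω]
    [MetricSpace Ω] [MeasurableSpace Ω] [BorelSpace Ω]
    (δ : ℝ) (hδ : 0 < δ) (hρ : ∀ x y : Ω, x ≠ y → dist x y = δ)
    (r : ℝ) (hr : 1 ≤ r) (n : ℕ) (hn : 0 < n)
    (hcard2 : 2 ≤ Fintype.card Ω) (hcard : Fintype.card Ω ≤ 32 * n)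
    (est : (Fin n → Ω) → MeasureTheory.Measure Ω) (hmeas : Measurable est)
    (hprob : ∀ x, MeasureTheory.IsProbabilityMeasure (est x)) :
    ENNReal.ofReal (3 * Real.log 2 / 2 ^ (r + 12) * δ ^ r
        * Real.sqrt (((Fintype.card Ω : ℝ) - 1) / n))
      ≤ ⨆ (P : MeasureTheory.Measure Ω) (_ : MeasureTheory.IsProbabilityMeasure P),
          ∫⁻ x, wassersteinPow r P (est x)
            ∂(MeasureTheory.Measure.pi fun _ : Fin n => P) := by
  classical
  haveI hMSC : MeasurableSingletonClass Ω := ⟨fun x => by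
    have hopen : IsOpen ({x} : Set Ω) := Metric.isOpen_singleton_iff.mpr
      ⟨δ, hδ, fun b hb => by
        by_contra hbx
        rw [hρ b x hbx] at hb
        exact lt_irrefl δ hb⟩
    exact hopen.measurableSet⟩
  set k := Fintype.card Ω with hkdef
  set m := k / 2 with hmdef
  have hm1 : 1 ≤ m := by omega
  have h2m : 2 * m ≤ k := by omega
  have hk2m : k ≤ 2 * m + 1 := by omega
  have hm0 : 0 < m := hm1
  have hn' : (0:ℝ) < n := by exact_mod_cast hn
  have hmR : (1:ℝ) ≤ m := by exact_mod_cast hm1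
  have hmR0 : (0:ℝ) < m := by linarith
  -- the paired points
  let e : Ω ≃ Fin k := Fintype.equivFin Ω
  have hlt : ∀ (p : Fin m × Bool), 2 * p.1.1 + (if p.2 then 0 else 1) < k := by
    rintro ⟨⟨j, hj⟩, b⟩
    cases b <;> simp <;> omega
  let pt : Fin m × Bool → Ω := fun p => e.symm ⟨2 * p.1.1 + (if p.2 then 0 else 1), hlt p⟩
  have hpt : Function.Injective pt := by
    rintro ⟨⟨a, ha⟩, b⟩ ⟨⟨a', ha'⟩, b'⟩ h
    have h2 := e.symm.injective h
    have h3 : 2 * a + (if b then 0 else 1) = 2 * a' + (if b' then 0 else 1) :=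
      congrArg Fin.val h2
    cases b <;> cases b' <;>
      simp only [if_true, if_false, Prod.mk.injEq, Fin.mk.injEq, Bool.false_eq_true,
        Bool.true_eq_false, and_true, and_false, reduceIte] at h3 ⊢ <;> omega
  -- the perturbation size
  set ε : ℝ := min 1 (Real.sqrt (m / (4 * n))) with hεdef
  have hε0 : 0 ≤ ε := le_min zero_le_one (Real.sqrt_nonneg _)
  have hε1 : ε ≤ 1 := min_le_left _ _
  have hε2 : ε ^ 2 * (4 * n) ≤ m := by
    have h1 : ε ≤ Real.sqrt (m / (4*n)) := min_le_right _ _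
    have hq := Real.sq_sqrt (show (0:ℝ) ≤ (m:ℝ)/(4*n) by positivity)
    have h2 : ε ^ 2 ≤ (m:ℝ) / (4*n) := by
      nlinarith [Real.sqrt_nonneg ((m:ℝ)/(4*n))]
    have h3 : (0:ℝ) < 4*n := by positivity
    calc ε^2 * (4*(n:ℝ)) ≤ ((m:ℝ)/(4*n)) * (4*n) := by nlinarith
      _ = m := by field_simp
  -- the hypothesis measures
  let Pm : (Fin m → Bool) → MeasureTheory.Measure Ω :=
    fun θ => ∑ ω : Ω, ENNReal.ofReal (Stmt11.qfun pt ε θ ω) • MeasureTheory.Measure.dirac ω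
  have hPm_apply : ∀ θ (s : Set Ω), Pm θ s
      = ∑ ω : Ω, ENNReal.ofReal (Stmt11.qfun pt ε θ ω) * MeasureTheory.Measure.dirac ω s := by
    intro θ s
    rw [MeasureTheory.Measure.finset_sum_apply]
    rfl
  have hPm_sing : ∀ θ ω₀, Pm θ {ω₀} = ENNReal.ofReal (Stmt11.qfun pt ε θ ω₀) := by
    intro θ ω₀
    rw [hPm_apply]
    rw [Finset.sum_eq_single ω₀]
    · rw [MeasureTheory.Measure.dirac_apply]
      simp
    · intro ω _ hne
      rw [MeasureTheory.Measure.dirac_apply]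
      simp [Set.indicator_apply, hne]
    · intro h; exact absurd (Finset.mem_univ ω₀) h
  have hPm_univ : ∀ θ, Pm θ Set.univ = 1 := by
    intro θ
    rw [hPm_apply]
    simp only [MeasureTheory.Measure.dirac_apply, Set.indicator_univ, Pi.one_apply, mul_one]
    rw [← ENNReal.ofReal_sum_of_nonneg (fun ω _ => Stmt11.qfun_nonneg pt ε hε0 hε1 θ ω),
      Stmt11.qfun_total pt ε hm0 θ, ENNReal.ofReal_one]
  have hPmprob : ∀ θ, MeasureTheory.IsProbabilityMeasure (Pm θ) := fun θ => ⟨hPm_univ θ⟩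
  have hPn_sing : ∀ θ (x : Fin n → Ω),
      (MeasureTheory.Measure.pi fun _ : Fin n => Pm θ) {x}
        = ENNReal.ofReal (∏ i, Stmt11.qfun pt ε θ (x i)) := by
    intro θ x
    haveI := hPmprob θ
    have hsing : ({x} : Set (Fin n → Ω)) = Set.pi Set.univ (fun i => {x i}) := by
      ext y
      simp [Set.mem_pi, funext_iff]
    rw [hsing, MeasureTheory.Measure.pi_pi,
      Finset.prod_congr rfl fun i (_ : i ∈ Finset.univ) => hPm_sing θ (x i)]
    exact (ENNReal.ofReal_prod_of_nonneg
      (fun i _ => Stmt11.qfun_nonneg pt ε hε0 hε1 θ (x i))).symm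
  -- the tests
  let tB : (Fin n → Ω) → Fin m → Bool := fun x j =>
    if (est x) {pt (j, false)} ≤ (est x) {pt (j, true)} then true else false
  -- pointwise Wasserstein lower bound
  have hpoint : ∀ (θ : Fin m → Bool) (x : Fin n → Ω),
      ENNReal.ofReal (δ ^ r * ((ε/(2*m)) * ∑ j, if tB x j = θ j then (0:ℝ) else 1))
        ≤ wassersteinPow r (Pm θ) (est x) := by
    intro θ x
    haveI := hprob x
    haveI := hPmprob θ
    have hqe1 : ∑ ω, ((est x) {ω}).toReal = 1 := by
      have h := Stmt11.sum_singleton_measure (est x)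
      rw [measure_univ] at h
      have h2 := congrArg ENNReal.toReal h
      rwa [ENNReal.toReal_sum (fun ω _ => measure_ne_top _ _), ENNReal.toReal_one] at h2
    have hhe : ∀ j : Fin m, (ε/m) * (if tB x j = θ j then (0:ℝ) else 1)
        ≤ |(Stmt11.qfun pt ε θ (pt (j, true)) - Stmt11.qfun pt ε θ (pt (j, false)))
          - (((est x) {pt (j, true)}).toReal - ((est x) {pt (j, false)}).toReal)| := by
      intro j
      by_cases hc : tB x j = θ j
      · rw [if_pos hc, mul_zero]
        exact abs_nonneg _
      · rw [if_neg hc, mul_one]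
        have hΔp : Stmt11.qfun pt ε θ (pt (j, true)) - Stmt11.qfun pt ε θ (pt (j, false))
            = (if θ j then ε/m else -(ε/m)) := by
          rw [Stmt11.qfun_apply pt ε hpt θ (j, true), Stmt11.qfun_apply pt ε hpt θ (j, false)]
          exact Stmt11.wgt_pair_diff ε hm0 θ j
        set d : ℝ := ((est x) {pt (j, true)}).toReal - ((est x) {pt (j, false)}).toReal with hd
        have hεm0 : 0 ≤ ε/m := by positivity
        cases hθ : θ j
        · -- θ j = false, so tB x j = true, so d ≥ 0
          have htB : tB x j = true := by
            cases htb : tB x j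
            · exact absurd (htb.trans hθ.symm) hc
            · rfl
          have hle : (est x) {pt (j, false)} ≤ (est x) {pt (j, true)} := by
            by_contra hcon
            simp only [tB, if_neg hcon] at htB
            exact Bool.false_ne_true htB
          have hd0 : 0 ≤ d := by
            rw [hd]
            have := (ENNReal.toReal_le_toReal (measure_ne_top _ _) (measure_ne_top _ _)).mpr hle
            linarith
          rw [hΔp, if_neg (by simp [hθ])]
          calc ε/m ≤ ε/m + d := by linarith
            _ = -(-(ε/m) - d) := by ring
            _ ≤ |(-(ε/m)) - d| := neg_le_abs _
        · -- θ j = true, so tB x j = false, so d < 0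
          have htB : tB x j = false := by
            cases htb : tB x j
            · rfl
            · exact absurd (htb.trans hθ.symm) hc
          have hlt' : (est x) {pt (j, true)} < (est x) {pt (j, false)} := by
            by_contra hcon
            push_neg at hcon
            simp only [tB, if_pos hcon] at htB
            simp at htB
          have hd0 : d ≤ 0 := by
            rw [hd]
            have := (ENNReal.toReal_le_toReal (measure_ne_top _ _) (measure_ne_top _ _)).mpr hlt'.le
            linarith
          rw [hΔp, if_pos (by simp [hθ])]
          calc ε/m ≤ ε/m - d := by linarith
            _ ≤ |ε/m - d| := le_abs_self _
    have hhalf := Stmt11.halfL1_lb pt hpt (Stmt11.qfun pt ε θ)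
      (fun ω => ((est x) {ω}).toReal)
      (Stmt11.qfun_total pt ε hm0 θ) hqe1
      (fun j => (ε/m) * (if tB x j = θ j then (0:ℝ) else 1)) hhe
    have hTV : (ε/(2*m)) * (∑ j, if tB x j = θ j then (0:ℝ) else 1)
        ≤ ∑ ω, max (((Pm θ) {ω}).toReal - ((est x) {ω}).toReal) 0 := by
      have heq : (ε/(2*m)) * (∑ j, if tB x j = θ j then (0:ℝ) else 1)
          = (∑ j, (ε/m) * (if tB x j = θ j then (0:ℝ) else 1)) / 2 := by
        rw [← Finset.mul_sum]
        ring
      rw [heq]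
      refine le_trans hhalf (le_of_eq (Finset.sum_congr rfl fun ω _ => ?_))
      rw [hPm_sing θ ω, ENNReal.toReal_ofReal (Stmt11.qfun_nonneg pt ε hε0 hε1 θ ω)]
    exact Stmt11.wp_lb δ hδ hρ r hr (Pm θ) (est x) _ hTV
  -- risk lower bound for each θ
  have hRisk : ∀ θ : Fin m → Bool,
      ENNReal.ofReal ((δ ^ r * (ε/(2*m))) * ∑ x : Fin n → Ω,
        (∑ j, if tB x j = θ j then (0:ℝ) else 1) * ∏ i, Stmt11.qfun pt ε θ (x i))
      ≤ ∫⁻ x, wassersteinPow r (Pm θ) (est x)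
          ∂(MeasureTheory.Measure.pi fun _ : Fin n => Pm θ) := by
    intro θ
    rw [MeasureTheory.lintegral_fintype]
    have hterm : ∀ x : Fin n → Ω,
        ENNReal.ofReal ((δ ^ r * (ε/(2*m))) * ((∑ j, if tB x j = θ j then (0:ℝ) else 1)
          * ∏ i, Stmt11.qfun pt ε θ (x i)))
        ≤ wassersteinPow r (Pm θ) (est x)
            * (MeasureTheory.Measure.pi fun _ : Fin n => Pm θ) {x} := by
      intro x
      rw [hPn_sing θ x]
      have h1 : (δ ^ r * (ε/(2*m))) * ((∑ j, if tB x j = θ j then (0:ℝ) else 1)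
            * ∏ i, Stmt11.qfun pt ε θ (x i))
          = (δ ^ r * ((ε/(2*m)) * ∑ j, if tB x j = θ j then (0:ℝ) else 1))
            * ∏ i, Stmt11.qfun pt ε θ (x i) := by ring
      have hcnt : (0:ℝ) ≤ ∑ j, if tB x j = θ j then (0:ℝ) else 1 :=
        Finset.sum_nonneg fun j _ => by split <;> norm_num
      have hnn : (0:ℝ) ≤ δ ^ r * ((ε/(2*m)) * ∑ j, if tB x j = θ j then (0:ℝ) else 1) :=
        mul_nonneg (Real.rpow_nonneg hδ.le r)
          (mul_nonneg (div_nonneg hε0 (by positivity)) hcnt)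
      rw [h1, ENNReal.ofReal_mul hnn]
      exact mul_le_mul' (hpoint θ x) le_rfl
    calc ENNReal.ofReal ((δ ^ r * (ε/(2*m))) * ∑ x : Fin n → Ω,
          (∑ j, if tB x j = θ j then (0:ℝ) else 1) * ∏ i, Stmt11.qfun pt ε θ (x i))
        = ∑ x : Fin n → Ω, ENNReal.ofReal ((δ ^ r * (ε/(2*m)))
            * ((∑ j, if tB x j = θ j then (0:ℝ) else 1) * ∏ i, Stmt11.qfun pt ε θ (x i))) := by
          rw [Finset.mul_sum, ENNReal.ofReal_sum_of_nonneg]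
          intro x _
          have hcnt : (0:ℝ) ≤ ∑ j, if tB x j = θ j then (0:ℝ) else 1 :=
            Finset.sum_nonneg fun j _ => by split <;> norm_num
          have hpn : (0:ℝ) ≤ ∏ i, Stmt11.qfun pt ε θ (x i) :=
            Finset.prod_nonneg fun i _ => Stmt11.qfun_nonneg pt ε hε0 hε1 θ (x i)
          have hc1 : (0:ℝ) ≤ δ ^ r * (ε/(2*m)) :=
            mul_nonneg (Real.rpow_nonneg hδ.le r) (div_nonneg hε0 (by positivity))
          exact mul_nonneg hc1 (mul_nonneg hcnt hpn)
      _ ≤ _ := Finset.sum_le_sum fun x _ => hterm x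
  
  -- Bayes bound and argmax
  set c2 : ℝ := δ ^ r * (ε/(2*m)) with hc2def
  have hc2nn : 0 ≤ c2 :=
    mul_nonneg (Real.rpow_nonneg hδ.le r) (div_nonneg hε0 (by positivity))
  have hbayes := Stmt11.bayes_lb pt ε hm0 hn hpt hε0 hε1 hε2 tB
  set Risk : (Fin m → Bool) → ℝ≥0∞ := fun θ =>
    ∫⁻ x, wassersteinPow r (Pm θ) (est x) ∂(MeasureTheory.Measure.pi fun _ : Fin n => Pm θ)
    with hRiskdef
  have hSnn : ∀ θ : Fin m → Bool, (0:ℝ) ≤ ∑ x : Fin n → Ω,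
      (∑ j, if tB x j = θ j then (0:ℝ) else 1) * ∏ i, Stmt11.qfun pt ε θ (x i) := by
    intro θ
    refine Finset.sum_nonneg fun x _ => mul_nonneg ?_ ?_
    · exact Finset.sum_nonneg fun j _ => by split <;> norm_num
    · exact Finset.prod_nonneg fun i _ => Stmt11.qfun_nonneg pt ε hε0 hε1 θ (x i)
  have hchain : ENNReal.ofReal (c2 * ((2:ℝ)^m * ((m:ℝ) * (9/64))))
      ≤ ∑ θ : Fin m → Bool, Risk θ := by
    calc ENNReal.ofReal (c2 * ((2:ℝ)^m * ((m:ℝ) * (9/64))))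
        ≤ ENNReal.ofReal (c2 * ∑ θ : Fin m → Bool, ∑ x : Fin n → Ω,
            (∑ j, if tB x j = θ j then (0:ℝ) else 1) * ∏ i, Stmt11.qfun pt ε θ (x i)) :=
          ENNReal.ofReal_le_ofReal (mul_le_mul_of_nonneg_left hbayes hc2nn)
      _ = ∑ θ : Fin m → Bool, ENNReal.ofReal (c2 * ∑ x : Fin n → Ω,
            (∑ j, if tB x j = θ j then (0:ℝ) else 1) * ∏ i, Stmt11.qfun pt ε θ (x i)) := by
          rw [Finset.mul_sum,
            ENNReal.ofReal_sum_of_nonneg (fun θ _ => mul_nonneg hc2nn (hSnn θ))]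
      _ ≤ ∑ θ : Fin m → Bool, Risk θ := Finset.sum_le_sum fun θ _ => hRisk θ
  obtain ⟨θs, _, hθs⟩ := Finset.exists_max_image (Finset.univ : Finset (Fin m → Bool)) Risk
    ⟨(fun _ => true), Finset.mem_univ _⟩
  have hsum_le : ∑ θ : Fin m → Bool, Risk θ ≤ ((2^m : ℕ) : ℝ≥0∞) * Risk θs := by
    have h := Finset.sum_le_card_nsmul Finset.univ Risk (Risk θs)
      (fun θ _ => hθs θ (Finset.mem_univ θ))
    have hcf : Fintype.card (Fin m → Bool) = 2^m := by
      rw [Fintype.card_fun, Fintype.card_bool, Fintype.card_fin]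
    rwa [Finset.card_univ, hcf, nsmul_eq_mul] at h
  have hcancel : ENNReal.ofReal (c2 * ((m:ℝ) * (9/64))) ≤ Risk θs := by
    have hmain : ((2^m : ℕ) : ℝ≥0∞) * ENNReal.ofReal (c2 * ((m:ℝ) * (9/64)))
        ≤ ((2^m : ℕ) : ℝ≥0∞) * Risk θs := by
      have hcast : ((2^m : ℕ) : ℝ≥0∞) = ENNReal.ofReal ((2:ℝ)^m) := by
        rw [ENNReal.ofReal_pow (by norm_num : (0:ℝ) ≤ 2)]
        norm_num
      have hl : ((2^m : ℕ) : ℝ≥0∞) * ENNReal.ofReal (c2 * ((m:ℝ) * (9/64)))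
          = ENNReal.ofReal (c2 * ((2:ℝ)^m * ((m:ℝ) * (9/64)))) := by
        rw [hcast, ← ENNReal.ofReal_mul (by positivity : (0:ℝ) ≤ (2:ℝ)^m)]
        congr 1
        ring
      rw [hl]
      exact hchain.trans hsum_le
    have h2 : ((2^m : ℕ) : ℝ≥0∞) ≠ 0 := by
      exact Nat.cast_ne_zero.mpr (pow_ne_zero m two_ne_zero)
    have h3 : ((2^m : ℕ) : ℝ≥0∞) ≠ ⊤ := ENNReal.natCast_ne_top _
    exact (ENNReal.mul_le_mul_iff_right h2 h3).mp hmain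
  have hfinal : ENNReal.ofReal (3 * Real.log 2 / 2 ^ (r + 12) * δ ^ r
      * Real.sqrt (((k : ℝ) - 1) / n)) ≤ ENNReal.ofReal (c2 * ((m:ℝ) * (9/64))) := by
    refine ENNReal.ofReal_le_ofReal ?_
    set T : ℝ := Real.sqrt (((k : ℝ) - 1) / n) with hTdef
    have hT0 : 0 ≤ T := Real.sqrt_nonneg _
    have hkR : (2:ℝ) ≤ k := by exact_mod_cast hcard2
    have hkn : (k:ℝ) ≤ 32 * n := by exact_mod_cast hcard
    have hvnn : (0:ℝ) ≤ ((k:ℝ) - 1) / n := div_nonneg (by linarith) (by positivity)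
    have hT6 : T ≤ 6 := by
      have h32 : ((k:ℝ) - 1) / n ≤ 36 := by
        rw [div_le_iff₀ hn']
        nlinarith
      have h := Real.sqrt_le_sqrt h32
      rwa [show (36:ℝ) = 6^2 by norm_num, Real.sqrt_sq (by norm_num : (0:ℝ) ≤ 6)] at h
    have hTε : T / 6 ≤ ε := by
      refine le_min (by linarith) ?_
      have h8 : ((k:ℝ) - 1) / n / 8 ≤ (m:ℝ) / (4*n) := by
        rw [div_div, div_le_div_iff₀ (by positivity) (by positivity)]
        have h2mR : (k:ℝ) - 1 ≤ 2*m := by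
          have h := hk2m
          have : (k:ℝ) ≤ 2*m + 1 := by exact_mod_cast h
          linarith
        nlinarith
      have hs8 : Real.sqrt (((k:ℝ) - 1) / n / 8) = T / Real.sqrt 8 := by
        rw [Real.sqrt_div hvnn]
      have hsqrt8 : Real.sqrt 8 ≤ 6 := by
        have h := Real.sqrt_le_sqrt (show (8:ℝ) ≤ 36 by norm_num)
        rwa [show (36:ℝ) = 6^2 by norm_num, Real.sqrt_sq (by norm_num : (0:ℝ) ≤ 6)] at h
      have hsqrt8pos : 0 < Real.sqrt 8 := Real.sqrt_pos.mpr (by norm_num)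
      calc T / 6 ≤ T / Real.sqrt 8 := div_le_div_of_nonneg_left hT0 hsqrt8pos hsqrt8
        _ = Real.sqrt (((k:ℝ) - 1) / n / 8) := hs8.symm
        _ ≤ Real.sqrt ((m:ℝ) / (4*n)) := Real.sqrt_le_sqrt h8
    have hδr : (0:ℝ) < δ ^ r := Real.rpow_pos_of_pos hδ r
    have hlog : Real.log 2 < 0.6931471808 := Real.log_two_lt_d9
    have hlog0 : 0 < Real.log 2 := Real.log_pos (by norm_num)
    have h2r : (8192:ℝ) ≤ 2 ^ (r + 12) := by
      have h13 : (2:ℝ) ^ (13:ℝ) ≤ 2 ^ (r + 12) :=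
        (Real.rpow_le_rpow_left_iff (by norm_num : (1:ℝ) < 2)).mpr (by linarith)
      rwa [show (13:ℝ) = ((13:ℕ):ℝ) by norm_num, Real.rpow_natCast,
        (by norm_num : (2:ℝ)^(13:ℕ) = 8192)] at h13
    have hconst : 3 * Real.log 2 / 2 ^ (r + 12) ≤ 9/768 := by
      calc 3 * Real.log 2 / 2 ^ (r + 12) ≤ 3 * 0.6931471808 / 8192 :=
            div_le_div₀ (by norm_num) (by linarith) (by norm_num) h2r
        _ ≤ 9/768 := by norm_num
    have hRHS : c2 * ((m:ℝ) * (9/64)) = δ ^ r * ((9/128) * ε) := by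
      rw [hc2def]
      have hm' : (m:ℝ) ≠ 0 := ne_of_gt hmR0
      field_simp
      ring
    rw [hRHS]
    calc 3 * Real.log 2 / 2 ^ (r + 12) * δ ^ r * T
        ≤ (9/768) * δ ^ r * T := by
          apply mul_le_mul_of_nonneg_right _ hT0
          exact mul_le_mul_of_nonneg_right hconst hδr.le
      _ = δ ^ r * ((9/128) * (T/6)) := by ring
      _ ≤ δ ^ r * ((9/128) * ε) := by
          apply mul_le_mul_of_nonneg_left _ hδr.le
          exact mul_le_mul_of_nonneg_left hTε (by norm_num)
  refine hfinal.trans (hcancel.trans ?_)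
  exact le_iSup₂_of_le (Pm θs) (hPmprob θs) le_rfl
end

section
/- Let D be a positive integer, r ∈ [1,∞), and let Ω = [0,1]^D with the Euclidean metric. There exists a constant c_r > 0 depending only on r such that for every integer n ≥ 2, inf_{P̂} sup_{P} E_{X_1,…,X_n ∼ P^n}[ W_r^r(P, P̂(X_1,…,X_n)) ] ≥ c_r · max{ n^{−r/D}, D^{r/2} · n^{−1/2} }, where the supremum is over all Borel probability measures P on [0,1]^D and the infimum is over all (possibly randomized) measurable estimators P̂ : Ω^n → {Borel probability measures on Ω}. -/
open MeasureTheory ENNReal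

/-- The unit cube `[0,1]^D` with the Euclidean metric. -/
def unitCube (D : ℕ) : Type :=
  {x : EuclideanSpace ℝ (Fin D) // ∀ i, x i ∈ Set.Icc (0 : ℝ) 1}

noncomputable instance (D : ℕ) : MetricSpace (unitCube D) := by
  unfold unitCube; infer_instance

noncomputable instance (D : ℕ) : MeasurableSpace (unitCube D) := borel _

instance (D : ℕ) : BorelSpace (unitCube D) := ⟨rfl⟩


open Finset


lemma sum_prod_pow {J : Type*} [Fintype J] [DecidableEq J] {β : Type*} [CommSemiring β] (n : ℕ) (v : J → β) :
    ∑ ω : Fin n → J, ∏ i, v (ω i) = (∑ j, v j) ^ n := by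
  classical
  have h : ((∑ j, v j) ^ n : β) = ∏ _i : Fin n, (∑ j ∈ (univ : Finset J), v j) := by simp
  rw [h, Finset.prod_univ_sum (t := fun _ : Fin n => (univ : Finset J)) (f := fun _ j => v j)]
  simp


lemma sqrt_prod' {ι : Type*} (s : Finset ι) (f : ι → ℝ) (hf : ∀ i, 0 ≤ f i) :
    Real.sqrt (∏ i ∈ s, f i) = ∏ i ∈ s, Real.sqrt (f i) := by
  induction s using Finset.cons_induction with
  | empty => simp
  | cons a s ha ih =>
      rw [Finset.prod_cons, Finset.prod_cons, Real.sqrt_mul (hf a), ih]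

lemma sum_min_sq_bound {ι : Type*} (s : Finset ι) (f g : ι → ℝ) (hf : ∀ i, 0 ≤ f i) (hg : ∀ i, 0 ≤ g i) :
    (∑ i ∈ s, Real.sqrt (f i * g i)) ^ 2 ≤ (∑ i ∈ s, min (f i) (g i)) * (∑ i ∈ s, f i + ∑ i ∈ s, g i) := by
  have h1 : (∑ i ∈ s, Real.sqrt (f i * g i)) ^ 2 ≤ (∑ i ∈ s, min (f i) (g i)) * (∑ i ∈ s, max (f i) (g i)) := by
    refine Finset.sum_sq_le_sum_mul_sum_of_sq_eq_mul s (fun i _ => le_min (hf i) (hg i))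
      (fun i _ => le_max_of_le_left (hf i)) (fun i _ => ?_)
    rw [Real.sq_sqrt (mul_nonneg (hf i) (hg i)), min_mul_max]
  refine h1.trans ?_
  have h2 : ∑ i ∈ s, max (f i) (g i) ≤ ∑ i ∈ s, f i + ∑ i ∈ s, g i := by
    rw [← Finset.sum_add_distrib]
    exact Finset.sum_le_sum (fun i _ => max_le (le_add_of_nonneg_right (hg i)) (le_add_of_nonneg_left (hf i)))
  exact mul_le_mul_of_nonneg_left h2 (Finset.sum_nonneg (fun i _ => le_min (hf i) (hg i)))

noncomputable section

def pw (s a : ℝ) {m : ℕ} (θ : Fin m → Bool) : Fin m × Bool → ℝ :=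
  fun j => (if θ j.1 = j.2 then 1 + s else 1 - s) * a

def pW (s a : ℝ) {m n : ℕ} (θ : Fin m → Bool) (ω : Fin n → Fin m × Bool) : ℝ :=
  ∏ i, pw s a θ (ω i)

lemma pw_nonneg {s a : ℝ} (hs0 : 0 ≤ s) (hs1 : s ≤ 1) (ha : 0 ≤ a) {m : ℕ} (θ : Fin m → Bool) (j : Fin m × Bool) :
    0 ≤ pw s a θ j := by
  unfold pw
  have h1 : (0:ℝ) ≤ 1 - s := by linarith
  have h0 : (0:ℝ) ≤ 1 + s := by linarith
  split <;> positivity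

lemma pW_nonneg {s a : ℝ} (hs0 : 0 ≤ s) (hs1 : s ≤ 1) (ha : 0 ≤ a) {m n : ℕ} (θ : Fin m → Bool)
    (ω : Fin n → Fin m × Bool) : 0 ≤ pW s a θ ω :=
  Finset.prod_nonneg fun i _ => pw_nonneg hs0 hs1 ha θ (ω i)

lemma sum_pw {s a : ℝ} {m : ℕ} (hm : 1 ≤ m) (ha : a = 1 / (2 * m)) (θ : Fin m → Bool) :
    ∑ j, pw s a θ j = 1 := by
  have hm0 : (m:ℝ) ≠ 0 := Nat.cast_ne_zero.mpr (by omega)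
  rw [Fintype.sum_prod_type]
  have h : ∀ k : Fin m, ∑ b : Bool, pw s a θ (k, b) = 2 * a := by
    intro k
    rw [Fintype.sum_bool]
    unfold pw
    cases h : θ k <;> simp [h] <;> ring
  rw [Finset.sum_congr rfl (fun k _ => h k)]
  simp [ha]
  field_simp

lemma sum_pW {s a : ℝ} {m n : ℕ} (hm : 1 ≤ m) (ha : a = 1 / (2 * m)) (θ : Fin m → Bool) :
    ∑ ω : Fin n → Fin m × Bool, pW s a θ ω = 1 := by
  unfold pW
  rw [sum_prod_pow, sum_pw hm ha θ, one_pow]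

def flipAt {m : ℕ} (θ : Fin m → Bool) (k : Fin m) : Fin m → Bool := Function.update θ k (!θ k)

lemma flipAt_same {m : ℕ} (θ : Fin m → Bool) (k : Fin m) : flipAt θ k k = !θ k := by
  simp [flipAt]

lemma flipAt_ne {m : ℕ} (θ : Fin m → Bool) {k l : Fin m} (h : l ≠ k) : flipAt θ k l = θ l := by
  simp [flipAt, Function.update_of_ne h]

lemma flipAt_invol {m : ℕ} (k : Fin m) : Function.Involutive (fun θ => flipAt θ k) := by
  intro θ
  funext l
  by_cases h : l = k
  · subst h; simp [flipAt]
  · simp [flipAt_ne _ h]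

lemma pw_flip_ne {s a : ℝ} {m : ℕ} (θ : Fin m → Bool) {k l : Fin m} (h : l ≠ k) (b : Bool) :
    pw s a (flipAt θ k) (l, b) = pw s a θ (l, b) := by
  unfold pw
  simp [flipAt_ne θ h]

lemma pw_flip_mul {s a : ℝ} {m : ℕ} (θ : Fin m → Bool) (k : Fin m) (b : Bool) :
    pw s a θ (k, b) * pw s a (flipAt θ k) (k, b) = (1 - s^2) * a^2 := by
  unfold pw
  simp only [flipAt_same]
  cases h : θ k <;> cases b <;> simp [h] <;> ring

lemma affinity_sum {s a : ℝ} (hs0 : 0 ≤ s) (hs1 : s ≤ 1) (ha : 0 ≤ a) {m : ℕ} (hm : 1 ≤ m)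
    (ham : a = 1 / (2 * m)) (θ : Fin m → Bool) (k : Fin m) :
    ∑ j, Real.sqrt (pw s a θ j * pw s a (flipAt θ k) j)
      = 1 - 2 * a * (1 - Real.sqrt (1 - s^2)) := by
  have hm0 : (m:ℝ) ≠ 0 := Nat.cast_ne_zero.mpr (by omega)
  rw [Fintype.sum_prod_type]
  have hsplit : ∀ l : Fin m, ∑ b : Bool, Real.sqrt (pw s a θ (l, b) * pw s a (flipAt θ k) (l, b))
      = if l = k then 2 * (Real.sqrt (1 - s^2) * a) else 2 * a := by
    intro l
    by_cases h : l = k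
    · subst h
      simp only [if_pos rfl]
      rw [Fintype.sum_bool, pw_flip_mul, pw_flip_mul]
      have h2 : Real.sqrt ((1 - s^2) * a^2) = Real.sqrt (1 - s^2) * a := by
        rw [Real.sqrt_mul (by nlinarith), Real.sqrt_sq ha]
      rw [h2, if_pos trivial]; ring
    · simp only [if_neg h]
      rw [Fintype.sum_bool, pw_flip_ne θ h, pw_flip_ne θ h]
      have h3 : ∀ b, Real.sqrt (pw s a θ (l, b) * pw s a θ (l, b)) = pw s a θ (l, b) := by
        intro b
        rw [← Real.sqrt_mul_self (pw_nonneg hs0 hs1 ha θ (l, b))]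
        rw [Real.sqrt_mul_self (Real.sqrt_nonneg _)]
      rw [h3, h3]
      have := sum_pw (s := s) hm ham θ
      unfold pw
      cases hb : θ l <;> simp [hb] <;> ring
  rw [Finset.sum_congr rfl (fun l _ => hsplit l)]
  rw [Finset.sum_ite, Finset.sum_const, Finset.sum_const]
  have h1 : (univ.filter (fun l : Fin m => l = k)).card = 1 := by
    rw [Finset.filter_eq', if_pos (Finset.mem_univ k)]; simp
  have h2 : (univ.filter (fun l : Fin m => ¬ l = k)).card = m - 1 := by
    rw [Finset.filter_ne', Finset.card_erase_of_mem (Finset.mem_univ k)]; simp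
  rw [h1, h2, nsmul_eq_mul, nsmul_eq_mul]
  have h3 : ((m - 1 : ℕ) : ℝ) = (m:ℝ) - 1 := by
    rw [Nat.cast_sub (by omega)]; simp
  rw [h3, ham]
  field_simp
  ring

lemma stat_lower (n m : ℕ) (hn : 1 ≤ n) (hm : 1 ≤ m) (s a : ℝ)
    (hs0 : 0 ≤ s) (hs1 : s ≤ 1) (ham : a = 1 / (2 * m))
    (haff : (n:ℝ) * (2 * a * (1 - Real.sqrt (1 - s^2))) ≤ 1/2)
    (g : (Fin n → Fin m × Bool) → Fin m × Bool → ℝ) :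
    ∃ θ : Fin m → Bool,
      s/16 ≤ ∑ ω : Fin n → Fin m × Bool, pW s a θ ω * ∑ j, |pw s a θ j - g ω j| := by
  have hm0 : (0:ℝ) < (m:ℝ) := by exact_mod_cast Nat.pos_of_ne_zero (by omega)
  have ha0 : 0 < a := by rw [ham]; positivity
  set t : (Fin n → Fin m × Bool) → Fin m → Bool :=
    fun ω k => if g ω (k, false) < g ω (k, true) then true else false with ht
  set Err : (Fin m → Bool) → Fin m → ℝ :=
    fun θ k => ∑ ω : Fin n → Fin m × Bool, pW s a θ ω * (if t ω k = θ k then 0 else 1) with hErr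
  -- step A
  have stepA : ∀ θ : Fin m → Bool,
      2*s*a * ∑ k, Err θ k ≤ ∑ ω : Fin n → Fin m × Bool, pW s a θ ω * ∑ j, |pw s a θ j - g ω j| := by
    intro θ
    have key : ∀ ω k, 2*s*a*(if t ω k = θ k then 0 else 1)
        ≤ ∑ b : Bool, |pw s a θ (k,b) - g ω (k,b)| := by
      intro ω k
      by_cases h : t ω k = θ k
      · rw [if_pos h, mul_zero]
        exact Finset.sum_nonneg fun b _ => abs_nonneg _
      · rw [if_neg h, mul_one, Fintype.sum_bool]
        by_cases hg : g ω (k, false) < g ω (k, true)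
        · have htt : t ω k = true := by simp [ht, hg]
          have hθ : θ k = false := by
            cases hθ' : θ k
            · rfl
            · exact absurd (htt.trans hθ'.symm) h
          have e1 : pw s a θ (k, true) = (1-s)*a := by unfold pw; simp [hθ]
          have e2 : pw s a θ (k, false) = (1+s)*a := by unfold pw; simp [hθ]
          rw [e1, e2]
          have h3 := neg_abs_le ((1-s)*a - g ω (k, true))
          have h2 := le_abs_self ((1+s)*a - g ω (k, false))
          linarith
        · have htt : t ω k = false := by simp [ht, hg]
          have hθ : θ k = true := by
            cases hθ' : θ k
            · exact absurd (htt.trans hθ'.symm) h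
            · rfl
          have e1 : pw s a θ (k, true) = (1+s)*a := by unfold pw; simp [hθ]
          have e2 : pw s a θ (k, false) = (1-s)*a := by unfold pw; simp [hθ]
          rw [e1, e2]
          have h1 := le_abs_self ((1+s)*a - g ω (k, true))
          have h4 := neg_abs_le ((1-s)*a - g ω (k, false))
          push_neg at hg
          linarith
    calc 2*s*a * ∑ k, Err θ k
        = ∑ ω : Fin n → Fin m × Bool, pW s a θ ω * ∑ k, 2*s*a*(if t ω k = θ k then 0 else 1) := by
          simp only [hErr]
          rw [Finset.mul_sum]
          simp_rw [Finset.mul_sum]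
          rw [Finset.sum_comm]
          exact Finset.sum_congr rfl fun ω _ => Finset.sum_congr rfl fun k _ => by ring
      _ ≤ _ := by
          refine Finset.sum_le_sum fun ω _ => mul_le_mul_of_nonneg_left ?_ (pW_nonneg hs0 hs1 ha0.le θ ω)
          calc ∑ k, 2*s*a*(if t ω k = θ k then 0 else 1)
              ≤ ∑ k, ∑ b : Bool, |pw s a θ (k,b) - g ω (k,b)| :=
                Finset.sum_le_sum fun k _ => key ω k
            _ = ∑ j : Fin m × Bool, |pw s a θ j - g ω j| := by rw [Fintype.sum_prod_type]
  -- step B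
  have stepB : ∀ (θ : Fin m → Bool) (k : Fin m),
      ∑ ω : Fin n → Fin m × Bool, min (pW s a θ ω) (pW s a (flipAt θ k) ω)
        ≤ Err θ k + Err (flipAt θ k) k := by
    intro θ k
    simp only [hErr]
    rw [← Finset.sum_add_distrib]
    refine Finset.sum_le_sum fun ω _ => ?_
    have hfk : flipAt θ k k = !θ k := flipAt_same θ k
    by_cases h : t ω k = θ k
    · have h2 : ¬ (t ω k = flipAt θ k k) := by
        rw [hfk, h]; cases θ k <;> simp
      rw [if_pos h, if_neg h2, mul_zero, mul_one, zero_add]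
      exact min_le_right _ _
    · have h2 : t ω k = flipAt θ k k := by
        rw [hfk]; revert h; cases t ω k <;> cases θ k <;> simp
      rw [if_neg h, if_pos h2, mul_zero, mul_one, add_zero]
      exact min_le_left _ _
  -- step C
  have stepC : ∀ (θ : Fin m → Bool) (k : Fin m),
      1/8 ≤ ∑ ω : Fin n → Fin m × Bool, min (pW s a θ ω) (pW s a (flipAt θ k) ω) := by
    intro θ k
    set θ' := flipAt θ k with hθ'
    have hA : ∑ ω : Fin n → Fin m × Bool, Real.sqrt (pW s a θ ω * pW s a θ' ω)
        = (1 - 2 * a * (1 - Real.sqrt (1 - s^2))) ^ n := by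
      have h1 : ∀ ω : Fin n → Fin m × Bool, Real.sqrt (pW s a θ ω * pW s a θ' ω)
          = ∏ i, Real.sqrt (pw s a θ (ω i) * pw s a θ' (ω i)) := by
        intro ω
        rw [pW, pW, ← Finset.prod_mul_distrib]
        exact sqrt_prod' _ _ fun i => mul_nonneg (pw_nonneg hs0 hs1 ha0.le θ _) (pw_nonneg hs0 hs1 ha0.le θ' _)
      have h2 := sum_prod_pow (n := n) (fun j : Fin m × Bool => Real.sqrt (pw s a θ j * pw s a θ' j))
      calc ∑ ω : Fin n → Fin m × Bool, Real.sqrt (pW s a θ ω * pW s a θ' ω)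
          = ∑ ω : Fin n → Fin m × Bool, ∏ i, Real.sqrt (pw s a θ (ω i) * pw s a θ' (ω i)) :=
            Finset.sum_congr rfl fun ω _ => h1 ω
        _ = (∑ j : Fin m × Bool, Real.sqrt (pw s a θ j * pw s a θ' j)) ^ n := h2
        _ = _ := by rw [affinity_sum hs0 hs1 ha0.le hm ham θ k]
    have hsle : Real.sqrt (1 - s^2) ≤ 1 := Real.sqrt_le_one.mpr (by nlinarith)
    have hγ0 : 0 ≤ 2 * a * (1 - Real.sqrt (1 - s^2)) := by nlinarith
    have hn' : (1:ℝ) ≤ (n:ℝ) := by exact_mod_cast hn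
    have hγ : 2 * a * (1 - Real.sqrt (1 - s^2)) ≤ 1/2 := by nlinarith
    have hAlow : (1/2:ℝ) ≤ (1 - 2 * a * (1 - Real.sqrt (1 - s^2))) ^ n := by
      have hb := one_add_mul_le_pow (a := -(2 * a * (1 - Real.sqrt (1 - s^2)))) (by linarith) n
      have he : ((1:ℝ) + -(2 * a * (1 - Real.sqrt (1 - s^2)))) = 1 - 2 * a * (1 - Real.sqrt (1 - s^2)) := by ring
      rw [he] at hb
      have h' : (n:ℝ) * -(2 * a * (1 - Real.sqrt (1 - s^2))) = -((n:ℝ) * (2 * a * (1 - Real.sqrt (1 - s^2)))) := by ring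
      rw [h'] at hb
      linarith
    have hCS := sum_min_sq_bound (univ : Finset (Fin n → Fin m × Bool))
      (fun ω => pW s a θ ω) (fun ω => pW s a θ' ω)
      (fun ω => pW_nonneg hs0 hs1 ha0.le θ ω) (fun ω => pW_nonneg hs0 hs1 ha0.le θ' ω)
    rw [sum_pW hm ham θ, sum_pW hm ham θ'] at hCS
    rw [hA] at hCS
    have h4 : (1/4:ℝ) ≤ ((1 - 2 * a * (1 - Real.sqrt (1 - s^2))) ^ n)^2 := by
      have h5 := mul_le_mul hAlow hAlow (by norm_num) (le_trans (by norm_num) hAlow)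
      calc (1/4:ℝ) = (1/2)*(1/2) := by norm_num
        _ ≤ _ := h5
        _ = _ := (sq ((1 - 2 * a * (1 - Real.sqrt (1 - s^2))) ^ n)).symm
    linarith
  -- step D
  have stepD : ∀ k : Fin m, (2:ℝ)^m / 16 ≤ ∑ θ : Fin m → Bool, Err θ k := by
    intro k
    have hinv := flipAt_invol (m := m) k
    have hflip : ∑ θ : Fin m → Bool, Err (flipAt θ k) k = ∑ θ : Fin m → Bool, Err θ k :=
      Fintype.sum_bijective _ hinv.bijective _ _ fun θ => rfl
    have hcard : (Fintype.card (Fin m → Bool) : ℝ) = 2^m := by simp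
    have h2 : (2:ℝ)^m / 8 ≤ ∑ θ : Fin m → Bool, (Err θ k + Err (flipAt θ k) k) := by
      calc (2:ℝ)^m / 8 = ∑ _θ : Fin m → Bool, (1/8:ℝ) := by
            rw [Finset.sum_const, nsmul_eq_mul, Finset.card_univ, hcard]; ring
        _ ≤ _ := Finset.sum_le_sum fun θ _ => (stepC θ k).trans (stepB θ k)
    rw [Finset.sum_add_distrib, hflip] at h2
    linarith
  -- combine
  have hcard : (Fintype.card (Fin m → Bool) : ℝ) = 2^m := by simp
  have htotal : ∑ θ : Fin m → Bool, (s/16 : ℝ)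
      ≤ ∑ θ : Fin m → Bool, ∑ ω : Fin n → Fin m × Bool, pW s a θ ω * ∑ j, |pw s a θ j - g ω j| := by
    calc ∑ θ : Fin m → Bool, (s/16 : ℝ) = 2^m * (s/16) := by
          rw [Finset.sum_const, nsmul_eq_mul, Finset.card_univ, hcard]
      _ = 2*s*a * ((m:ℝ) * ((2:ℝ)^m/16)) := by
          rw [ham]; field_simp
      _ ≤ 2*s*a * ∑ k : Fin m, ∑ θ : Fin m → Bool, Err θ k := by
          refine mul_le_mul_of_nonneg_left ?_ (by positivity)
          calc (m:ℝ) * ((2:ℝ)^m/16) = ∑ _k : Fin m, ((2:ℝ)^m/16) := by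
                rw [Finset.sum_const, nsmul_eq_mul, Finset.card_univ, Fintype.card_fin]
            _ ≤ _ := Finset.sum_le_sum fun k _ => stepD k
      _ = ∑ θ : Fin m → Bool, 2*s*a * ∑ k, Err θ k := by
          rw [Finset.sum_comm, Finset.mul_sum]
      _ ≤ _ := Finset.sum_le_sum fun θ _ => stepA θ
  obtain ⟨θ, _, hθ⟩ := Finset.exists_le_of_sum_le Finset.univ_nonempty htotal
  exact ⟨θ, hθ⟩

end

section Discrete
open scoped Classical
variable {Ω : Type*} [MeasurableSpace Ω] [MeasurableSingletonClass Ω]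

lemma discrete_apply {J : Type*} [Fintype J] (z : J → Ω) (c : J → ℝ≥0∞) (A : Set Ω) :
    (∑ j, c j • Measure.dirac (z j)) A = ∑ j, c j * (if z j ∈ A then 1 else 0) := by
  rw [Measure.finset_sum_apply]
  exact Finset.sum_congr rfl fun j _ => by
    rw [Measure.smul_apply, smul_eq_mul, Measure.dirac_apply, Set.indicator_apply]
    simp

lemma prob_discrete {J : Type*} [Fintype J] (z : J → Ω) (w : J → ℝ) (hw0 : ∀ j, 0 ≤ w j)
    (hw1 : ∑ j, w j = 1) :
    IsProbabilityMeasure (∑ j, ENNReal.ofReal (w j) • Measure.dirac (z j)) := by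
  constructor
  rw [discrete_apply]
  simp only [Set.mem_univ, if_true, mul_one]
  rw [← ENNReal.ofReal_sum_of_nonneg fun j _ => hw0 j, hw1, ENNReal.ofReal_one]

lemma lintegral_discrete {J : Type*} [Fintype J] (z : J → Ω) (c : J → ℝ≥0∞) (f : Ω → ℝ≥0∞) :
    ∫⁻ x, f x ∂(∑ j, c j • Measure.dirac (z j)) = ∑ j, c j * f (z j) := by
  rw [lintegral_finset_sum_measure]
  exact Finset.sum_congr rfl fun j _ => by rw [lintegral_smul_measure, lintegral_dirac, smul_eq_mul]

lemma pi_discrete {n : ℕ} {J : Type*} [Fintype J] [DecidableEq J] (z : J → Ω) (w : J → ℝ)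
    (hw0 : ∀ j, 0 ≤ w j) (hw1 : ∑ j, w j = 1) :
    Measure.pi (fun _ : Fin n => (∑ j, ENNReal.ofReal (w j) • Measure.dirac (z j) : Measure Ω)) =
    ∑ ω : Fin n → J, ENNReal.ofReal (∏ i, w (ω i)) • Measure.dirac (z ∘ ω) := by
  haveI : IsProbabilityMeasure (∑ j, ENNReal.ofReal (w j) • Measure.dirac (z j) : Measure Ω) :=
    prob_discrete z w hw0 hw1
  refine Measure.pi_eq fun s hs => ?_
  rw [discrete_apply (fun ω => z ∘ ω) (fun ω => ENNReal.ofReal (∏ i, w (ω i))) (Set.pi Set.univ s)]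
  have h1 : ∀ ω : Fin n → J, ENNReal.ofReal (∏ i, w (ω i)) * (if (z ∘ ω) ∈ Set.pi Set.univ s then 1 else 0)
      = ∏ i, (ENNReal.ofReal (w (ω i)) * (if z (ω i) ∈ s i then 1 else 0)) := by
    intro ω
    rw [Finset.prod_mul_distrib, ← ENNReal.ofReal_prod_of_nonneg fun i _ => hw0 (ω i),
      Finset.prod_boole]
    congr 2
    simp [Set.mem_univ_pi, Function.comp]
  rw [Finset.sum_congr rfl fun ω _ => h1 ω]
  have h2 := Finset.prod_univ_sum (t := fun _ : Fin n => (univ : Finset J))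
    (f := fun i j => ENNReal.ofReal (w j) * (if z j ∈ s i then 1 else 0))
  rw [Fintype.piFinset_univ] at h2
  rw [← h2]
  exact Finset.prod_congr rfl fun i _ => by rw [discrete_apply]

end Discrete

section Wass
open scoped Classical
variable {Ω : Type*} [MeasurableSpace Ω] [PseudoEMetricSpace Ω] [OpensMeasurableSpace Ω]
  [MeasurableSingletonClass Ω]

lemma lintegral_edist_rpow_lb (r : ℝ) (hr : 0 ≤ r) (μ : Measure (Ω × Ω)) (e' : ℝ≥0∞)
    {S : Set (Ω × Ω)} (hS : MeasurableSet S) (hd : ∀ p ∈ S, e' ≤ edist p.1 p.2) :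
    e' ^ r * μ S ≤ ∫⁻ p : Ω × Ω, edist p.1 p.2 ^ r ∂μ := by
  calc e' ^ r * μ S = ∫⁻ p, S.indicator (fun _ => e' ^ r) p ∂μ := by
        rw [lintegral_indicator_const hS]
    _ ≤ _ := by
        refine lintegral_mono fun p => ?_
        by_cases hp : p ∈ S
        · rw [Set.indicator_of_mem hp]
          exact ENNReal.rpow_le_rpow (hd p hp) hr
        · rw [Set.indicator_of_notMem hp]
          exact zero_le

lemma coupling_lb (r : ℝ) (hr : 0 ≤ r) {J : Type*} [Fintype J]
    (z : J → Ω) (hz : Function.Injective z)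
    (w : J → ℝ) (hw0 : ∀ j, 0 ≤ w j) (hw1 : ∑ j, w j = 1)
    (e : ℝ) (he : 0 < e)
    (hsep : ∀ j l, j ≠ l → ENNReal.ofReal e + ENNReal.ofReal e ≤ edist (z j) (z l))
    (Q : Measure Ω) (hQ : IsProbabilityMeasure Q)
    (μ : Measure (Ω × Ω))
    (hμ1 : μ.map Prod.fst = (∑ j, ENNReal.ofReal (w j) • Measure.dirac (z j) : Measure Ω))
    (hμ2 : μ.map Prod.snd = Q) :
    ENNReal.ofReal (e ^ r * ∑ j, |w j - (Q (EMetric.ball (z j) (ENNReal.ofReal e))).toReal|)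
      ≤ 2 * ∫⁻ p : Ω × Ω, edist p.1 p.2 ^ r ∂μ := by
  set P : Measure Ω := ∑ j, ENNReal.ofReal (w j) • Measure.dirac (z j) with hP
  set e' : ℝ≥0∞ := ENNReal.ofReal e with he'
  set B : J → Set Ω := fun j => EMetric.ball (z j) e' with hB
  have hBmeas : ∀ j, MeasurableSet (B j) := fun j => EMetric.isOpen_ball.measurableSet
  have hfst : ∀ A : Set Ω, MeasurableSet A → μ (Prod.fst ⁻¹' A) = P A := by
    intro A hA
    rw [← hμ1, Measure.map_apply measurable_fst hA]
  have hsnd : ∀ A : Set Ω, MeasurableSet A → μ (Prod.snd ⁻¹' A) = Q A := by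
    intro A hA
    rw [← hμ2, Measure.map_apply measurable_snd hA]
  have hPsing : ∀ j, P {z j} = ENNReal.ofReal (w j) := by
    intro j
    rw [hP, discrete_apply]
    rw [Finset.sum_eq_single j]
    · simp
    · intro l _ hlj
      simp [hz.ne hlj]
    · simp
  have hPrange : P (Set.range z)ᶜ = 0 := by
    rw [hP, discrete_apply]
    refine Finset.sum_eq_zero fun j _ => ?_
    simp [Set.mem_range]
  -- ball disjointness
  have hballs : ∀ j l, j ≠ l → Disjoint (B j) (B l) := by
    intro j l hjl
    rw [Set.disjoint_left]
    intro y hyj hyl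
    rw [hB] at hyj hyl
    simp only [EMetric.mem_ball] at hyj hyl
    have h1 : edist (z j) (z l) ≤ edist y (z j) + edist y (z l) := by
      calc edist (z j) (z l) ≤ edist (z j) y + edist y (z l) := edist_triangle _ _ _
        _ = edist y (z j) + edist y (z l) := by rw [edist_comm (z j) y]
    have h2 := hsep j l hjl
    have h3 : edist (z j) (z l) < e' + e' := lt_of_le_of_lt h1 (ENNReal.add_lt_add hyj hyl)
    exact absurd h2 (not_le.mpr h3)
  -- sets E and F
  set E : J → Set (Ω × Ω) := fun j => (Prod.fst ⁻¹' {z j}) ∩ (Prod.snd ⁻¹' (B j))ᶜ with hE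
  set F : J → Set (Ω × Ω) := fun j => (Prod.fst ⁻¹' (Set.range z \ {z j})) ∩ (Prod.snd ⁻¹' (B j)) with hF
  have hEmeas : ∀ j, MeasurableSet (E j) :=
    fun j => ((measurable_fst (MeasurableSet.singleton (z j)))).inter
      ((measurable_snd (hBmeas j)).compl)
  have hFmeas : ∀ j, MeasurableSet (F j) :=
    fun j => (measurable_fst (((Set.finite_range z).measurableSet).diff
      (MeasurableSet.singleton (z j)))).inter (measurable_snd (hBmeas j))
  have hEdisj : Pairwise (Function.onFun Disjoint E) := by
    intro j l hjl
    rw [Function.onFun, Set.disjoint_left]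
    rintro p ⟨hp1, _⟩ ⟨hq1, _⟩
    exact hz.ne hjl ((Set.mem_singleton_iff.mp hp1).symm.trans (Set.mem_singleton_iff.mp hq1))
  have hFdisj : Pairwise (Function.onFun Disjoint F) := by
    intro j l hjl
    rw [Function.onFun, Set.disjoint_left]
    rintro p ⟨_, hp2⟩ ⟨_, hq2⟩
    exact Set.disjoint_left.mp (hballs j l hjl) hp2 hq2
  -- distance bounds
  have hEdist : ∀ p ∈ ⋃ j, E j, e' ≤ edist p.1 p.2 := by
    rintro p hp
    obtain ⟨j, hpj⟩ := Set.mem_iUnion.mp hp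
    obtain ⟨hp1, hp2⟩ := hpj
    have hp1' : p.1 = z j := hp1
    have : ¬ (p.2 ∈ B j) := hp2
    rw [hB] at this
    simp only [EMetric.mem_ball, not_lt] at this
    rw [hp1', edist_comm]
    exact not_lt.mp this
  have hFdist : ∀ p ∈ ⋃ j, F j, e' ≤ edist p.1 p.2 := by
    rintro p hp
    obtain ⟨j, hpj⟩ := Set.mem_iUnion.mp hp
    obtain ⟨hp1, hp2⟩ := hpj
    obtain ⟨⟨l, hl⟩, hpne⟩ := hp1
    by_contra hlt
    rw [not_le] at hlt
    have hlj : l ≠ j := by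
      rintro rfl
      exact hpne (Set.mem_singleton_iff.mpr hl.symm)
    have h1 : edist (z l) (z j) ≤ edist p.1 p.2 + edist p.2 (z j) := by
      rw [hl]
      exact edist_triangle _ _ _
    have h2 : edist p.2 (z j) < e' := by
      have hmem := hp2
      rw [hB] at hmem
      exact hmem
    have h3 : edist (z l) (z j) < e' + e' := lt_of_le_of_lt h1 (ENNReal.add_lt_add hlt h2)
    exact absurd (hsep l j hlj) (not_le.mpr h3)
  -- measure lower bounds
  have hmuE : ∀ j, ENNReal.ofReal (w j) - Q (B j) ≤ μ (E j) := by
    intro j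
    have hsplit := measure_inter_add_diff (μ := μ) (Prod.fst ⁻¹' {z j}) (measurable_snd (hBmeas j))
    have hEj : E j = (Prod.fst ⁻¹' {z j}) \ (Prod.snd ⁻¹' (B j)) := by
      rw [hE]; rw [Set.diff_eq]
    have h1 : μ (Prod.fst ⁻¹' {z j}) = ENNReal.ofReal (w j) := by
      rw [hfst _ (MeasurableSet.singleton (z j)), hPsing j]
    have h2 : μ ((Prod.fst ⁻¹' {z j}) ∩ (Prod.snd ⁻¹' (B j))) ≤ Q (B j) := by
      rw [← hsnd _ (hBmeas j)]
      exact measure_mono Set.inter_subset_right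
    rw [tsub_le_iff_left]
    calc ENNReal.ofReal (w j) = μ ((Prod.fst ⁻¹' {z j}) ∩ (Prod.snd ⁻¹' (B j)))
          + μ ((Prod.fst ⁻¹' {z j}) \ (Prod.snd ⁻¹' (B j))) := by rw [hsplit, h1]
      _ ≤ Q (B j) + μ (E j) := by rw [hEj]; exact add_le_add_left h2 _
  have hmuF : ∀ j, Q (B j) - ENNReal.ofReal (w j) ≤ μ (F j) := by
    intro j
    have hcover : (Prod.snd ⁻¹' (B j)) ⊆ F j ∪ (Prod.fst ⁻¹' {z j}) ∪ (Prod.fst ⁻¹' (Set.range z)ᶜ) := by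
      intro p hp
      by_cases h1 : p.1 ∈ Set.range z
      · by_cases h2 : p.1 = z j
        · exact Or.inl (Or.inr h2)
        · exact Or.inl (Or.inl ⟨⟨h1, h2⟩, hp⟩)
      · exact Or.inr h1
    have h3 : Q (B j) ≤ μ (F j) + ENNReal.ofReal (w j) + 0 := by
      calc Q (B j) = μ (Prod.snd ⁻¹' (B j)) := (hsnd _ (hBmeas j)).symm
        _ ≤ μ (F j ∪ (Prod.fst ⁻¹' {z j}) ∪ (Prod.fst ⁻¹' (Set.range z)ᶜ)) := measure_mono hcover
        _ ≤ μ (F j ∪ (Prod.fst ⁻¹' {z j})) + μ (Prod.fst ⁻¹' (Set.range z)ᶜ) := measure_union_le _ _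
        _ ≤ (μ (F j) + μ (Prod.fst ⁻¹' {z j})) + μ (Prod.fst ⁻¹' (Set.range z)ᶜ) :=
            add_le_add_left (measure_union_le _ _) _
        _ = μ (F j) + ENNReal.ofReal (w j) + 0 := by
            rw [hfst _ (MeasurableSet.singleton (z j)), hPsing j,
              hfst _ ((Set.finite_range z).measurableSet.compl), hPrange]
    rw [add_zero] at h3
    rw [tsub_le_iff_left]
    calc Q (B j) ≤ μ (F j) + ENNReal.ofReal (w j) := h3
      _ = ENNReal.ofReal (w j) + μ (F j) := add_comm _ _
  -- total measures
  have hmuEtot : ∑ j, (ENNReal.ofReal (w j) - Q (B j)) ≤ μ (⋃ j, E j) := by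
    rw [measure_iUnion hEdisj hEmeas, tsum_fintype]
    exact Finset.sum_le_sum fun j _ => hmuE j
  have hmuFtot : ∑ j, (Q (B j) - ENNReal.ofReal (w j)) ≤ μ (⋃ j, F j) := by
    rw [measure_iUnion hFdisj hFmeas, tsum_fintype]
    exact Finset.sum_le_sum fun j _ => hmuF j
  -- abs bound
  have habs : ∀ j, ENNReal.ofReal (|w j - (Q (B j)).toReal|)
      ≤ (ENNReal.ofReal (w j) - Q (B j)) + (Q (B j) - ENNReal.ofReal (w j)) := by
    intro j
    have hfin : Q (B j) ≠ ⊤ := measure_ne_top Q _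
    have hq : Q (B j) = ENNReal.ofReal ((Q (B j)).toReal) := (ENNReal.ofReal_toReal hfin).symm
    rcases le_total ((Q (B j)).toReal) (w j) with h | h
    · rw [abs_of_nonneg (by linarith)]
      rw [ENNReal.ofReal_sub _ ENNReal.toReal_nonneg]
      rw [← hq]
      exact le_add_of_le_of_nonneg le_rfl zero_le
    · rw [abs_of_nonpos (by linarith), neg_sub]
      rw [ENNReal.ofReal_sub _ (hw0 j)]
      rw [← hq]
      exact le_add_of_nonneg_of_le zero_le le_rfl
  -- put it together
  have hsum : ENNReal.ofReal (∑ j, |w j - (Q (B j)).toReal|) ≤ μ (⋃ j, E j) + μ (⋃ j, F j) := by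
    rw [ENNReal.ofReal_sum_of_nonneg fun j _ => abs_nonneg _]
    calc ∑ j, ENNReal.ofReal (|w j - (Q (B j)).toReal|)
        ≤ ∑ j, ((ENNReal.ofReal (w j) - Q (B j)) + (Q (B j) - ENNReal.ofReal (w j))) :=
          Finset.sum_le_sum fun j _ => habs j
      _ = (∑ j, (ENNReal.ofReal (w j) - Q (B j))) + ∑ j, (Q (B j) - ENNReal.ofReal (w j)) :=
          Finset.sum_add_distrib
      _ ≤ _ := add_le_add hmuEtot hmuFtot
  have hIE := lintegral_edist_rpow_lb r hr μ e' (MeasurableSet.iUnion hEmeas) hEdist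
  have hIF := lintegral_edist_rpow_lb r hr μ e' (MeasurableSet.iUnion hFmeas) hFdist
  calc ENNReal.ofReal (e ^ r * ∑ j, |w j - (Q (B j)).toReal|)
      = e' ^ r * ENNReal.ofReal (∑ j, |w j - (Q (B j)).toReal|) := by
        rw [ENNReal.ofReal_mul (Real.rpow_nonneg he.le r), he', ENNReal.ofReal_rpow_of_pos he]
    _ ≤ e' ^ r * (μ (⋃ j, E j) + μ (⋃ j, F j)) := mul_le_mul_right hsum _
    _ = e' ^ r * μ (⋃ j, E j) + e' ^ r * μ (⋃ j, F j) := mul_add _ _ _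
    _ ≤ (∫⁻ p : Ω × Ω, edist p.1 p.2 ^ r ∂μ) + ∫⁻ p : Ω × Ω, edist p.1 p.2 ^ r ∂μ :=
        add_le_add hIE hIF
    _ = 2 * ∫⁻ p : Ω × Ω, edist p.1 p.2 ^ r ∂μ := (two_mul _).symm

end Wass

section Glue
open scoped Classical
variable {Ω : Type*} [MeasurableSpace Ω] [PseudoEMetricSpace Ω] [OpensMeasurableSpace Ω]
  [MeasurableSingletonClass Ω]

lemma wassersteinPow_lb (r : ℝ) (hr : 0 ≤ r) {J : Type*} [Fintype J]
    (z : J → Ω) (hz : Function.Injective z)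
    (w : J → ℝ) (hw0 : ∀ j, 0 ≤ w j) (hw1 : ∑ j, w j = 1)
    (e : ℝ) (he : 0 < e)
    (hsep : ∀ j l, j ≠ l → ENNReal.ofReal e + ENNReal.ofReal e ≤ edist (z j) (z l))
    (Q : Measure Ω) (hQ : IsProbabilityMeasure Q) :
    ENNReal.ofReal (e ^ r * (∑ j, |w j - (Q (EMetric.ball (z j) (ENNReal.ofReal e))).toReal|) / 2)
      ≤ wassersteinPow r (∑ j, ENNReal.ofReal (w j) • Measure.dirac (z j)) Q := by
  rw [wassersteinPow]
  refine le_iInf₂ fun μ hμ => ?_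
  obtain ⟨hμ1, hμ2⟩ := hμ
  have h := coupling_lb r hr z hz w hw0 hw1 e he hsep Q hQ μ hμ1 hμ2
  rw [ENNReal.ofReal_div_of_pos (by norm_num : (0:ℝ) < 2)]
  have h2 : ENNReal.ofReal (2:ℝ) = 2 := by simp
  rw [h2]
  rw [ENNReal.div_le_iff_le_mul (Or.inl (by norm_num)) (Or.inl (by norm_num))]
  calc ENNReal.ofReal (e ^ r * ∑ j, |w j - (Q (EMetric.ball (z j) (ENNReal.ofReal e))).toReal|)
      ≤ 2 * ∫⁻ p : Ω × Ω, edist p.1 p.2 ^ r ∂μ := h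
    _ = (∫⁻ p : Ω × Ω, edist p.1 p.2 ^ r ∂μ) * 2 := mul_comm _ _

lemma risk_lb (r : ℝ) (hr : 0 ≤ r) {J : Type*} [Fintype J] [DecidableEq J]
    (z : J → Ω) (hz : Function.Injective z)
    (w : J → ℝ) (hw0 : ∀ j, 0 ≤ w j) (hw1 : ∑ j, w j = 1)
    (e : ℝ) (he : 0 < e)
    (hsep : ∀ j l, j ≠ l → ENNReal.ofReal e + ENNReal.ofReal e ≤ edist (z j) (z l))
    (n : ℕ) (est : (Fin n → Ω) → Measure Ω) (hest : ∀ x, IsProbabilityMeasure (est x)) :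
    ENNReal.ofReal (e ^ r * (∑ ω : Fin n → J, (∏ i, w (ω i)) *
        ∑ j, |w j - ((est (z ∘ ω)) (EMetric.ball (z j) (ENNReal.ofReal e))).toReal|) / 2)
      ≤ ∫⁻ x, wassersteinPow r (∑ j, ENNReal.ofReal (w j) • Measure.dirac (z j)) (est x)
          ∂(Measure.pi fun _ : Fin n => (∑ j, ENNReal.ofReal (w j) • Measure.dirac (z j))) := by
  rw [pi_discrete z w hw0 hw1]
  rw [lintegral_discrete (fun ω : Fin n → J => z ∘ ω) (fun ω => ENNReal.ofReal (∏ i, w (ω i)))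
    (fun x => wassersteinPow r (∑ j, ENNReal.ofReal (w j) • Measure.dirac (z j)) (est x))]
  have hWnn : ∀ ω : Fin n → J, 0 ≤ ∏ i, w (ω i) := fun ω => Finset.prod_nonneg fun i _ => hw0 (ω i)
  have hdnn : ∀ ω : Fin n → J, 0 ≤ e ^ r *
      (∑ j, |w j - ((est (z ∘ ω)) (EMetric.ball (z j) (ENNReal.ofReal e))).toReal|) / 2 := by
    intro ω
    have := Real.rpow_nonneg he.le r
    positivity
  calc ENNReal.ofReal (e ^ r * (∑ ω : Fin n → J, (∏ i, w (ω i)) *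
        ∑ j, |w j - ((est (z ∘ ω)) (EMetric.ball (z j) (ENNReal.ofReal e))).toReal|) / 2)
      = ENNReal.ofReal (∑ ω : Fin n → J, (∏ i, w (ω i)) *
          (e ^ r * (∑ j, |w j - ((est (z ∘ ω)) (EMetric.ball (z j) (ENNReal.ofReal e))).toReal|) / 2)) := by
        congr 1
        rw [Finset.mul_sum, Finset.sum_div]
        exact Finset.sum_congr rfl fun ω _ => by ring
    _ = ∑ ω : Fin n → J, ENNReal.ofReal ((∏ i, w (ω i)) *
          (e ^ r * (∑ j, |w j - ((est (z ∘ ω)) (EMetric.ball (z j) (ENNReal.ofReal e))).toReal|) / 2)) := by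
        rw [ENNReal.ofReal_sum_of_nonneg fun ω _ => mul_nonneg (hWnn ω) (hdnn ω)]
    _ ≤ ∑ ω : Fin n → J, ENNReal.ofReal (∏ i, w (ω i)) *
          wassersteinPow r (∑ j, ENNReal.ofReal (w j) • Measure.dirac (z j)) (est (z ∘ ω)) := by
        refine Finset.sum_le_sum fun ω _ => ?_
        rw [ENNReal.ofReal_mul (hWnn ω)]
        exact mul_le_mul_right (wassersteinPow_lb r hr z hz w hw0 hw1 e he hsep
          (est (z ∘ ω)) (hest (z ∘ ω))) _

end Glue

noncomputable section

def ucMk {D : ℕ} (v : EuclideanSpace ℝ (Fin D)) (h : ∀ i, v i ∈ Set.Icc (0:ℝ) 1) : unitCube D :=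
  ⟨v, h⟩

lemma ucMk_dist {D : ℕ} (v v' : EuclideanSpace ℝ (Fin D)) (h : ∀ i, v i ∈ Set.Icc (0:ℝ) 1)
    (h' : ∀ i, v' i ∈ Set.Icc (0:ℝ) 1) : dist (ucMk v h) (ucMk v' h') = dist v v' := rfl

lemma ucMk_edist {D : ℕ} (v v' : EuclideanSpace ℝ (Fin D)) (h : ∀ i, v i ∈ Set.Icc (0:ℝ) 1)
    (h' : ∀ i, v' i ∈ Set.Icc (0:ℝ) 1) :
    edist (ucMk v h) (ucMk v' h') = ENNReal.ofReal (dist v v') := by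
  rw [edist_dist, ucMk_dist]

lemma ucMk_inj {D : ℕ} {v v' : EuclideanSpace ℝ (Fin D)} {h h'} (hne : v ≠ v') :
    ucMk v h ≠ ucMk (D := D) v' h' := by
  intro hcontra
  exact hne (congrArg Subtype.val hcontra)

-- corners
def corner0 (D : ℕ) : unitCube D := ucMk (WithLp.toLp 2 (fun _ => 0)) (fun i => Set.mem_Icc.mpr ⟨le_refl 0, zero_le_one⟩)
def corner1 (D : ℕ) : unitCube D := ucMk (WithLp.toLp 2 (fun _ => 1)) (fun i => Set.mem_Icc.mpr ⟨zero_le_one, le_refl 1⟩)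

lemma corner_dist (D : ℕ) : dist (corner0 D) (corner1 D) = Real.sqrt D := by
  rw [corner0, corner1, ucMk_dist, EuclideanSpace.dist_eq]
  congr 1
  have : ∀ i : Fin D, dist ((fun _ => (0:ℝ)) i) ((fun _ => (1:ℝ)) i) ^ 2 = 1 := by
    intro i; simp [Real.dist_eq]
  rw [Finset.sum_congr rfl fun i _ => this i]
  simp

lemma corner_ne (D : ℕ) (hD : 0 < D) : corner0 D ≠ corner1 D := by
  apply ucMk_inj
  intro hcontra
  have := congrArg (fun v : EuclideanSpace ℝ (Fin D) => v ⟨0, hD⟩) hcontra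
  norm_num at this

-- grid
def gridPt (D M : ℕ) (hM : 0 < M) (κ : Fin D → Fin M) : unitCube D :=
  ucMk (WithLp.toLp 2 (fun i => (κ i : ℝ) / M)) (fun i => by
    show (κ i : ℝ) / M ∈ Set.Icc (0:ℝ) 1
    constructor
    · positivity
    · rw [div_le_one (by exact_mod_cast hM)]
      have := (κ i).2
      have h1 : (κ i : ℝ) < M := by exact_mod_cast this
      linarith)

lemma gridPt_dist_lb (D M : ℕ) (hM : 0 < M) (κ κ' : Fin D → Fin M) (hne : κ ≠ κ') :
    1 / (M:ℝ) ≤ dist (gridPt D M hM κ) (gridPt D M hM κ') := by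
  obtain ⟨i0, hi0⟩ := Function.ne_iff.mp hne
  rw [gridPt, gridPt, ucMk_dist, EuclideanSpace.dist_eq]
  have hM0 : (0:ℝ) < M := by exact_mod_cast hM
  have hterm : (1/(M:ℝ))^2 ≤ dist ((κ i0 : ℝ)/M) ((κ' i0 : ℝ)/M) ^ 2 := by
    have h1 : (1:ℝ) ≤ |(κ i0 : ℝ) - (κ' i0 : ℝ)| := by
      have hne2 : (κ i0 : ℤ) ≠ (κ' i0 : ℤ) := by
        intro h
        apply hi0
        have : ((κ i0 : ℕ) : ℤ) = ((κ' i0 : ℕ) : ℤ) := by exact_mod_cast h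
        exact Fin.ext (by exact_mod_cast this)
      have h2 : (1:ℤ) ≤ |(κ i0 : ℤ) - (κ' i0 : ℤ)| := Int.one_le_abs (sub_ne_zero.mpr hne2)
      have h3 : (1:ℝ) ≤ |((κ i0 : ℤ) : ℝ) - ((κ' i0 : ℤ) : ℝ)| := by exact_mod_cast h2
      push_cast at h3
      exact h3
    have h4 : dist ((κ i0 : ℝ)/M) ((κ' i0 : ℝ)/M) = |(κ i0 : ℝ) - (κ' i0 : ℝ)| / M := by
      rw [Real.dist_eq, ← sub_div, abs_div, abs_of_pos hM0]
    rw [h4]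
    have h5 : (1:ℝ)/M ≤ |(κ i0 : ℝ) - (κ' i0 : ℝ)| / M := by gcongr
    exact pow_le_pow_left₀ (by positivity) h5 2
  have hsum : dist ((κ i0 : ℝ)/M) ((κ' i0 : ℝ)/M) ^ 2
      ≤ ∑ i, dist ((fun i => (κ i : ℝ)/M) i) ((fun i => (κ' i : ℝ)/M) i) ^ 2 :=
    Finset.single_le_sum (f := fun i => dist ((κ i : ℝ)/M) ((κ' i : ℝ)/M) ^ 2)
      (fun i _ => sq_nonneg _) (Finset.mem_univ i0)
  calc 1/(M:ℝ) = Real.sqrt ((1/(M:ℝ))^2) := by rw [Real.sqrt_sq (by positivity)]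
    _ ≤ _ := Real.sqrt_le_sqrt (hterm.trans hsum)

lemma gridPt_inj (D M : ℕ) (hM : 0 < M) (hD : 0 < D) : Function.Injective (gridPt D M hM) := by
  intro κ κ' h
  by_contra hne
  have := gridPt_dist_lb D M hM κ κ' hne
  rw [h, dist_self] at this
  have hM0 : (0:ℝ) < M := by exact_mod_cast hM
  have : (0:ℝ) < 1/M := by positivity
  linarith

end


section MainProof
open scoped Classical

lemma one_sub_sqrt_le {x : ℝ} (h0 : 0 ≤ x) (h1 : x ≤ 1) : 1 - Real.sqrt (1 - x) ≤ x := by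
  have h3 : ((1-x))^2 ≤ (1-x) := by nlinarith
  have h4 : (1-x) = Real.sqrt ((1-x)^2) := (Real.sqrt_sq (by linarith)).symm
  have h5 : Real.sqrt ((1-x)^2) ≤ Real.sqrt (1-x) := Real.sqrt_le_sqrt h3
  linarith [h4 ▸ h5]

lemma case_bound (D : ℕ) (r : ℝ) (hr0 : 0 ≤ r) (n m : ℕ) (hn : 1 ≤ n) (hm : 1 ≤ m)
    (s a e : ℝ) (hs0 : 0 ≤ s) (hs1 : s ≤ 1) (ham : a = 1/(2*(m:ℝ))) (he : 0 < e)
    (haff : (n:ℝ) * (2 * a * (1 - Real.sqrt (1 - s^2))) ≤ 1/2)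
    (z : Fin m × Bool → unitCube D) (hz : Function.Injective z)
    (hsep : ∀ j l, j ≠ l → ENNReal.ofReal e + ENNReal.ofReal e ≤ edist (z j) (z l))
    (est : (Fin n → unitCube D) → MeasureTheory.Measure (unitCube D))
    (hestp : ∀ x, MeasureTheory.IsProbabilityMeasure (est x)) :
    ENNReal.ofReal (e ^ r * (s/16) / 2)
      ≤ ⨆ (P : MeasureTheory.Measure (unitCube D))
          (_ : MeasureTheory.IsProbabilityMeasure P),
          ∫⁻ x, wassersteinPow r P (est x)
            ∂(MeasureTheory.Measure.pi fun _ : Fin n => P) := by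
  obtain ⟨θ, hθ⟩ := stat_lower n m hn hm s a hs0 hs1 ham haff
    (fun ω j => ((est (z ∘ ω)) (EMetric.ball (z j) (ENNReal.ofReal e))).toReal)
  have ha0 : 0 ≤ a := by rw [ham]; positivity
  have hw0 : ∀ j, 0 ≤ pw s a θ j := pw_nonneg hs0 hs1 ha0 θ
  have hw1 := sum_pw (s := s) hm ham θ
  have hrisk := risk_lb r hr0 z hz (pw s a θ) hw0 hw1 e he hsep n est hestp
  have hP : IsProbabilityMeasure
      (∑ j, ENNReal.ofReal (pw s a θ j) • Measure.dirac (z j) : Measure (unitCube D)) :=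
    prob_discrete z _ hw0 hw1
  have hθ' : s/16 ≤ ∑ ω : Fin n → Fin m × Bool, (∏ i, pw s a θ (ω i)) *
      ∑ j, |pw s a θ j - ((est (z ∘ ω)) (EMetric.ball (z j) (ENNReal.ofReal e))).toReal| := hθ
  have her : 0 ≤ e ^ r := Real.rpow_nonneg he.le r
  refine le_trans (ENNReal.ofReal_le_ofReal ?_) (le_trans hrisk (le_iSup₂_of_le _ hP le_rfl))
  have hmul : e ^ r * (s/16) ≤ e ^ r * ∑ ω : Fin n → Fin m × Bool, (∏ i, pw s a θ (ω i)) *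
      ∑ j, |pw s a θ j - ((est (z ∘ ω)) (EMetric.ball (z j) (ENNReal.ofReal e))).toReal| :=
    mul_le_mul_of_nonneg_left hθ' her
  linarith

/-- Example 2 (lower bound): minimax lower bound for distribution estimation on the unit
cube `[0,1]^D` in `W_r^r` loss, with a constant depending only on `r`. -/
theorem stmt_12 (r : ℝ) (hr : 1 ≤ r) :
    ∃ c : ℝ, 0 < c ∧
      ∀ D : ℕ, 0 < D → ∀ n : ℕ, 2 ≤ n →
        ∀ est : (Fin n → unitCube D) → MeasureTheory.Measure (unitCube D),
          Measurable est → (∀ x, MeasureTheory.IsProbabilityMeasure (est x)) →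
          ENNReal.ofReal (c * max ((n : ℝ) ^ (-(r / D))) ((D : ℝ) ^ (r / 2) * (n : ℝ) ^ (-(1 : ℝ) / 2)))
            ≤ ⨆ (P : MeasureTheory.Measure (unitCube D))
                (_ : MeasureTheory.IsProbabilityMeasure P),
                ∫⁻ x, wassersteinPow r P (est x)
                  ∂(MeasureTheory.Measure.pi fun _ : Fin n => P) := by
  have hr0 : (0:ℝ) ≤ r := by linarith
  have hc : (0:ℝ) < (8:ℝ)^(-r)/64 := by positivity
  refine ⟨(8:ℝ)^(-r)/64, hc, ?_⟩
  intro D hD n hn est _ hestp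
  have hn1 : 1 ≤ n := by omega
  have hnR : (1:ℝ) ≤ (n:ℝ) := by exact_mod_cast hn1
  have hDR : (1:ℝ) ≤ (D:ℝ) := by exact_mod_cast hD
  have hnpos : (0:ℝ) < (n:ℝ) := by linarith
  have hDpos : (0:ℝ) < (D:ℝ) := by linarith
  have h2r_pos : (0:ℝ) < (2:ℝ)^r := Real.rpow_pos_of_pos (by norm_num) r
  have h8 : (8:ℝ)^(-r) ≤ ((2:ℝ)^r)⁻¹ := by
    rw [Real.rpow_neg (by norm_num : (0:ℝ) ≤ 8)]
    have h28 : (2:ℝ)^r ≤ (8:ℝ)^r := Real.rpow_le_rpow (by norm_num) (by norm_num) hr0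
    exact inv_anti₀ h2r_pos h28
  -- ==================== BOUND A ====================
  have boundA : ENNReal.ofReal ((8:ℝ)^(-r)/64 * ((D:ℝ)^(r/2) * (n:ℝ)^(-(1:ℝ)/2)))
      ≤ ⨆ (P : MeasureTheory.Measure (unitCube D))
          (_ : MeasureTheory.IsProbabilityMeasure P),
          ∫⁻ x, wassersteinPow r P (est x)
            ∂(MeasureTheory.Measure.pi fun _ : Fin n => P) := by
    set s : ℝ := Real.sqrt (1/(2*(n:ℝ))) with hs_def
    have hs0 : 0 ≤ s := Real.sqrt_nonneg _
    have hsq : s^2 = 1/(2*(n:ℝ)) := Real.sq_sqrt (by positivity)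
    have hs1 : s ≤ 1 := Real.sqrt_le_one.mpr (by rw [div_le_one (by positivity)]; linarith)
    have hsqrtD_pos : (0:ℝ) < Real.sqrt D := Real.sqrt_pos.mpr hDpos
    have he : (0:ℝ) < Real.sqrt D / 2 := by positivity
    set z : Fin 1 × Bool → unitCube D :=
      fun j => if j.2 = true then corner1 D else corner0 D with hz_def
    have hzne : ∀ j l : Fin 1 × Bool, j ≠ l → j.2 ≠ l.2 := by
      intro j l hjl hb
      exact hjl (Prod.ext (Subsingleton.elim _ _) hb)
    have hzval : ∀ j : Fin 1 × Bool, z j = if j.2 = true then corner1 D else corner0 D :=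
      fun j => rfl
    have hz : Function.Injective z := by
      intro j l h
      by_contra hjl
      have hb := hzne j l hjl
      rw [hzval, hzval] at h
      cases hj2 : j.2 <;> cases hl2 : l.2
      · exact hb (hj2.trans hl2.symm)
      · rw [hj2, hl2] at h; simp at h; exact corner_ne D hD h
      · rw [hj2, hl2] at h; simp at h; exact corner_ne D hD h.symm
      · exact hb (hj2.trans hl2.symm)
    have hdistz : ∀ j l : Fin 1 × Bool, j ≠ l → dist (z j) (z l) = Real.sqrt D := by
      intro j l hjl
      have hb := hzne j l hjl
      rw [hzval j, hzval l]
      cases hj2 : j.2 <;> cases hl2 : l.2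
      · exact absurd (hj2.trans hl2.symm) hb
      · simpa using corner_dist D
      · have h1 : (if (true:Bool) = true then corner1 D else corner0 D) = corner1 D := if_pos rfl
        have h2 : (if (false:Bool) = true then corner1 D else corner0 D) = corner0 D := by norm_num
        rw [h1, h2, dist_comm]
        exact corner_dist D
      · exact absurd (hj2.trans hl2.symm) hb
    have hsep : ∀ j l : Fin 1 × Bool, j ≠ l →
        ENNReal.ofReal (Real.sqrt D / 2) + ENNReal.ofReal (Real.sqrt D / 2)
          ≤ edist (z j) (z l) := by
      intro j l hjl
      rw [edist_dist, hdistz j l hjl, ← ENNReal.ofReal_add he.le he.le]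
      exact ENNReal.ofReal_le_ofReal (by linarith)
    have haff : (n:ℝ) * (2 * (1/2 : ℝ) * (1 - Real.sqrt (1 - s^2))) ≤ 1/2 := by
      rw [hsq]
      have hle := one_sub_sqrt_le (x := 1/(2*(n:ℝ))) (by positivity)
        (by rw [div_le_one (by positivity)]; linarith)
      calc (n:ℝ) * (2 * (1/2 : ℝ) * (1 - Real.sqrt (1 - 1/(2*(n:ℝ)))))
          ≤ (n:ℝ) * (2 * (1/2 : ℝ) * (1/(2*(n:ℝ)))) := by
            refine mul_le_mul_of_nonneg_left ?_ (by positivity)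
            refine mul_le_mul_of_nonneg_left hle (by norm_num)
        _ = 1/2 := by field_simp
    have hcb := case_bound D r hr0 n 1 hn1 le_rfl s (1/2) (Real.sqrt D / 2) hs0 hs1
      (by norm_num) he haff z hz hsep est hestp
    refine le_trans (ENNReal.ofReal_le_ofReal ?_) hcb
    have hXpos : (0:ℝ) < (D:ℝ)^(r/2) := Real.rpow_pos_of_pos hDpos _
    have hsqn_pos : (0:ℝ) < Real.sqrt n := Real.sqrt_pos.mpr hnpos
    have hnhalf : (n:ℝ)^(-(1:ℝ)/2) = (Real.sqrt n)⁻¹ := by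
      rw [show (-(1:ℝ)/2) = -(1/2 : ℝ) by ring, Real.rpow_neg hnpos.le, Real.sqrt_eq_rpow]
    have her : (Real.sqrt D / 2)^r = (D:ℝ)^(r/2) / (2:ℝ)^r := by
      rw [Real.div_rpow (Real.sqrt_nonneg _) (by norm_num), Real.sqrt_eq_rpow,
        ← Real.rpow_mul hDpos.le, show ((1:ℝ)/2*r) = r/2 from by ring]
    have hs_eq : s = (Real.sqrt (2*(n:ℝ)))⁻¹ := by rw [hs_def, one_div, Real.sqrt_inv]
    have hsqrt2 : Real.sqrt 2 ≤ 2 := by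
      nlinarith [Real.sq_sqrt (by norm_num : (0:ℝ) ≤ 2), Real.sqrt_nonneg 2]
    have h2n : Real.sqrt (2*(n:ℝ)) ≤ 2 * Real.sqrt n := by
      rw [Real.sqrt_mul (by norm_num : (0:ℝ) ≤ 2)]
      exact mul_le_mul_of_nonneg_right hsqrt2 (Real.sqrt_nonneg _)
    have hs_lb : (Real.sqrt n)⁻¹/2 ≤ s := by
      rw [hs_eq]
      calc (Real.sqrt n)⁻¹/2 = (2 * Real.sqrt n)⁻¹ := by rw [mul_inv]; ring
        _ ≤ (Real.sqrt (2*(n:ℝ)))⁻¹ := inv_anti₀ (Real.sqrt_pos.mpr (by linarith)) h2n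
    rw [hnhalf, her]
    have h9 : (8:ℝ)^(-r)/64 * ((D:ℝ)^(r/2) * (Real.sqrt n)⁻¹)
        ≤ ((2:ℝ)^r)⁻¹/64 * ((D:ℝ)^(r/2) * (Real.sqrt n)⁻¹) := by
      apply mul_le_mul_of_nonneg_right _ (by positivity)
      linarith
    have h10 : ((2:ℝ)^r)⁻¹/64 * ((D:ℝ)^(r/2) * (Real.sqrt n)⁻¹)
        = ((D:ℝ)^(r/2)/(2:ℝ)^r) * (((Real.sqrt n)⁻¹/2)/16)/2 := by ring
    have h11 : ((D:ℝ)^(r/2)/(2:ℝ)^r) * (((Real.sqrt n)⁻¹/2)/16)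
        ≤ ((D:ℝ)^(r/2)/(2:ℝ)^r) * (s/16) := by
      apply mul_le_mul_of_nonneg_left _ (by positivity)
      linarith
    linarith
  -- ==================== BOUND B ====================
  have boundB : ENNReal.ofReal ((8:ℝ)^(-r)/64 * (n:ℝ)^(-(r/(D:ℝ))))
      ≤ ⨆ (P : MeasureTheory.Measure (unitCube D))
          (_ : MeasureTheory.IsProbabilityMeasure P),
          ∫⁻ x, wassersteinPow r P (est x)
            ∂(MeasureTheory.Measure.pi fun _ : Fin n => P) := by
    set M : ℕ := ⌈((2*n:ℕ):ℝ) ^ ((D:ℝ)⁻¹)⌉₊ with hM_def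
    have h2n_pos : (0:ℝ) < ((2*n:ℕ):ℝ) := by push_cast; linarith
    have h2n_ge1 : (1:ℝ) ≤ ((2*n:ℕ):ℝ) := by push_cast; linarith
    have hX1 : (1:ℝ) ≤ ((2*n:ℕ):ℝ) ^ ((D:ℝ)⁻¹) := by
      have := Real.rpow_le_rpow_of_exponent_le h2n_ge1
        (le_of_lt (by positivity : (0:ℝ) < (D:ℝ)⁻¹))
      rw [Real.rpow_zero] at this
      exact this
    have hM_pos : 0 < M := Nat.ceil_pos.mpr (by linarith)
    have hMR_pos : (0:ℝ) < (M:ℝ) := by exact_mod_cast hM_pos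
    have hle_ceil : ((2*n:ℕ):ℝ) ^ ((D:ℝ)⁻¹) ≤ (M:ℝ) := Nat.le_ceil _
    have hpow : 2*n ≤ M^D := by
      have h2 : ((2*n:ℕ):ℝ) = (((2*n:ℕ):ℝ)^((D:ℝ)⁻¹))^(D:ℕ) := by
        rw [← Real.rpow_natCast (((2*n:ℕ):ℝ)^((D:ℝ)⁻¹)) D, ← Real.rpow_mul h2n_pos.le,
          inv_mul_cancel₀ (by exact_mod_cast hD.ne' : (D:ℝ) ≠ 0), Real.rpow_one]
      have h3 : ((2*n:ℕ):ℝ) ≤ ((M:ℝ))^(D:ℕ) := by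
        rw [h2]
        exact pow_le_pow_left₀ (Real.rpow_nonneg h2n_pos.le _) hle_ceil D
      exact_mod_cast h3
    have hcard : Fintype.card (Fin n × Bool) ≤ Fintype.card (Fin D → Fin M) := by
      simp only [Fintype.card_prod, Fintype.card_fin, Fintype.card_bool, Fintype.card_fun]
      omega
    obtain ⟨emb⟩ := Function.Embedding.nonempty_of_card_le hcard
    set z : Fin n × Bool → unitCube D := fun j => gridPt D M hM_pos (emb j) with hz_def
    have hz : Function.Injective z := (gridPt_inj D M hM_pos hD).comp emb.injective
    have he : (0:ℝ) < 1/(2*(M:ℝ)) := by positivity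
    have hsep : ∀ j l : Fin n × Bool, j ≠ l →
        ENNReal.ofReal (1/(2*(M:ℝ))) + ENNReal.ofReal (1/(2*(M:ℝ))) ≤ edist (z j) (z l) := by
      intro j l hjl
      rw [edist_dist, ← ENNReal.ofReal_add he.le he.le]
      apply ENNReal.ofReal_le_ofReal
      have hlb := gridPt_dist_lb D M hM_pos (emb j) (emb l)
        (fun h => hjl (emb.injective h))
      have hMne : (M:ℝ) ≠ 0 := hMR_pos.ne'
      have heq : 1/(2*(M:ℝ)) + 1/(2*(M:ℝ)) = 1/(M:ℝ) := by
        field_simp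
        norm_num
      rw [heq]
      exact hlb
    have haff : (n:ℝ) * (2 * (1/(2*(n:ℝ))) * (1 - Real.sqrt (1 - (1/2:ℝ)^2))) ≤ 1/2 := by
      have hsqrt34 : (1/2:ℝ) ≤ Real.sqrt (1 - (1/2:ℝ)^2) := by
        calc (1/2:ℝ) = Real.sqrt ((1/2)^2) := (Real.sqrt_sq (by norm_num)).symm
          _ ≤ _ := Real.sqrt_le_sqrt (by norm_num)
      have hone : (n:ℝ) * (2 * (1/(2*(n:ℝ)))) = 1 := by field_simp
      calc (n:ℝ) * (2 * (1/(2*(n:ℝ))) * (1 - Real.sqrt (1 - (1/2:ℝ)^2)))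
          = ((n:ℝ) * (2 * (1/(2*(n:ℝ))))) * (1 - Real.sqrt (1 - (1/2:ℝ)^2)) := by ring
        _ = 1 - Real.sqrt (1 - (1/2:ℝ)^2) := by rw [hone]; ring
        _ ≤ 1/2 := by linarith
    have hcb := case_bound D r hr0 n n hn1 hn1 (1/2) (1/(2*(n:ℝ))) (1/(2*(M:ℝ)))
      (by norm_num) (by norm_num) rfl he haff z hz hsep est hestp
    refine le_trans (ENNReal.ofReal_le_ofReal ?_) hcb
    -- real inequality: 8^(-r)/64 * n^(-(r/D)) ≤ (1/(2M))^r * ((1/2)/16)/2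
    have hnd_pos : (0:ℝ) < (n:ℝ)^((D:ℝ)⁻¹) := Real.rpow_pos_of_pos hnpos _
    have hMub : (M:ℝ) ≤ 4 * (n:ℝ)^((D:ℝ)⁻¹) := by
      have hc1 : (M:ℝ) < ((2*n:ℕ):ℝ)^((D:ℝ)⁻¹) + 1 := Nat.ceil_lt_add_one (by positivity)
      have hc2 : ((2*n:ℕ):ℝ)^((D:ℝ)⁻¹) = (2:ℝ)^((D:ℝ)⁻¹) * (n:ℝ)^((D:ℝ)⁻¹) := by
        rw [show ((2*n:ℕ):ℝ) = (2:ℝ)*(n:ℝ) by push_cast; ring]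
        exact Real.mul_rpow (by norm_num) hnpos.le
      have hc3 : (2:ℝ)^((D:ℝ)⁻¹) ≤ 2 := by
        have h := Real.rpow_le_rpow_of_exponent_le (by norm_num : (1:ℝ) ≤ 2)
          (show (D:ℝ)⁻¹ ≤ 1 by
            rw [inv_le_one_iff₀]
            right; exact hDR)
        rwa [Real.rpow_one] at h
      have hc4 : ((2*n:ℕ):ℝ)^((D:ℝ)⁻¹) ≤ 2 * (n:ℝ)^((D:ℝ)⁻¹) := by
        rw [hc2]
        exact mul_le_mul_of_nonneg_right hc3 hnd_pos.le
      have hc5 : (1:ℝ) ≤ (n:ℝ)^((D:ℝ)⁻¹) := by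
        have := Real.rpow_le_rpow_of_exponent_le hnR
          (le_of_lt (by positivity : (0:ℝ) < (D:ℝ)⁻¹))
        rwa [Real.rpow_zero] at this
      linarith
    have hbase : (8:ℝ)⁻¹ * ((n:ℝ)^(-(D:ℝ)⁻¹)) ≤ 1/(2*(M:ℝ)) := by
      rw [Real.rpow_neg hnpos.le]
      have h1 : (8:ℝ)⁻¹ * ((n:ℝ)^((D:ℝ)⁻¹))⁻¹ = (8 * (n:ℝ)^((D:ℝ)⁻¹))⁻¹ := by
        rw [mul_inv]
      rw [h1, one_div]
      apply inv_anti₀ (by positivity)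
      linarith
    have hpowineq : (8:ℝ)^(-r) * (n:ℝ)^(-(r/(D:ℝ))) ≤ (1/(2*(M:ℝ)))^r := by
      have e1 : (8:ℝ)^(-r) = ((8:ℝ)⁻¹)^r := by
        rw [Real.rpow_neg (by norm_num : (0:ℝ) ≤ 8), ← Real.inv_rpow (by norm_num : (0:ℝ) ≤ 8)]
      have e2 : (n:ℝ)^(-(r/(D:ℝ))) = ((n:ℝ)^(-(D:ℝ)⁻¹))^r := by
        rw [← Real.rpow_mul hnpos.le]
        congr 1
        field_simp
      rw [e1, e2, ← Real.mul_rpow (by norm_num) (Real.rpow_nonneg hnpos.le _)]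
      exact Real.rpow_le_rpow (by positivity) hbase hr0
    have hfinal : (1/(2*(M:ℝ)))^r * ((1/2:ℝ)/16)/2 = (1/(2*(M:ℝ)))^r / 64 := by ring
    rw [hfinal]
    calc (8:ℝ)^(-r)/64 * (n:ℝ)^(-(r/(D:ℝ)))
        = ((8:ℝ)^(-r) * (n:ℝ)^(-(r/(D:ℝ))))/64 := by ring
      _ ≤ (1/(2*(M:ℝ)))^r / 64 := by linarith
  -- ==================== COMBINE ====================
  rcases le_total ((n:ℝ)^(-(r/(D:ℝ)))) ((D:ℝ)^(r/2) * (n:ℝ)^(-(1:ℝ)/2)) with h | h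
  · rw [max_eq_right h]; exact boundA
  · rw [max_eq_left h]; exact boundB

end MainProof
end

section
/- Let (Ω,ρ) be a metric space with its Borel σ-algebra, P a Borel probability measure on Ω, and let P̂ be the empirical distribution of n i.i.d. samples from P. Let B ⊆ Ω be a Borel set and let 𝒮 be a finite Borel partition of B. Then E[ ∑_{S ∈ 𝒮} |P(S) − P̂(S)| ] ≤ min{ 2·P(B), √( P(B)·|𝒮| / n ) }. -/
open MeasureTheory ENNReal

section StmtHelpers
open MeasureTheory ENNReal NNReal Set


lemma two_mul_le_sq (a b : ℝ≥0∞) : 2 * (a * b) ≤ a ^ 2 + b ^ 2 := by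
  rcases eq_or_ne a ⊤ with rfl | ha
  · simp [pow_two]
  rcases eq_or_ne b ⊤ with rfl | hb
  · simp [pow_two]
  lift a to ℝ≥0 using ha
  lift b to ℝ≥0 using hb
  rw [← ENNReal.coe_mul, ← ENNReal.coe_pow, ← ENNReal.coe_pow,
    ← ENNReal.coe_add, ← ENNReal.coe_ofNat, ← ENNReal.coe_mul, ENNReal.coe_le_coe,
    ← NNReal.coe_le_coe]
  push_cast
  nlinarith [sq_nonneg ((a:ℝ) - b)]

lemma ennrDiff_comm (a b : ℝ≥0∞) : ennrDiff a b = ennrDiff b a := by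
  simp [ennrDiff, add_comm]

lemma ennrDiff_sq_aux (a b : ℝ≥0∞) (ha : a ≠ ⊤) (hab : a ≤ b) :
    ennrDiff a b ^ 2 + 2 * (a * b) ≤ a ^ 2 + b ^ 2 := by
  obtain ⟨c, rfl⟩ : ∃ c, b = a + c := ⟨b - a, (add_tsub_cancel_of_le hab).symm⟩
  rw [ennrDiff, tsub_eq_zero_of_le hab, ENNReal.add_sub_cancel_left ha, zero_add]
  calc c ^ 2 + 2 * (a * (a + c)) = a ^ 2 + (a + c) ^ 2 := by ring
  _ ≤ _ := le_rfl

lemma ennrDiff_sq (a b : ℝ≥0∞) (ha : a ≠ ⊤) (hb : b ≠ ⊤) :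
    ennrDiff a b ^ 2 + 2 * (a * b) ≤ a ^ 2 + b ^ 2 := by
  rcases le_total a b with h | h
  · exact ennrDiff_sq_aux a b ha h
  · rw [ennrDiff_comm, mul_comm a b, add_comm (a^2)]
    exact ennrDiff_sq_aux b a hb h

lemma le_rpow_half (x y : ℝ≥0∞) (h : x ^ 2 ≤ y) : x ≤ y ^ ((1:ℝ)/2) := by
  have : x = (x ^ 2 : ℝ≥0∞) ^ ((1:ℝ)/2) := by
    rw [← ENNReal.rpow_natCast x 2, ← ENNReal.rpow_mul]
    norm_num
  rw [this]
  exact ENNReal.rpow_le_rpow h (by norm_num)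

lemma sum_rpow_half_le {ι : Type*} (s : Finset ι) (a : ι → ℝ≥0∞) :
    ∑ i ∈ s, (a i) ^ ((1:ℝ)/2) ≤ ((s.card : ℝ≥0∞) * ∑ i ∈ s, a i) ^ ((1:ℝ)/2) := by
  apply le_rpow_half
  have key : ∀ i ∈ s, ∀ j ∈ s,
      2 * ((a i) ^ ((1:ℝ)/2) * (a j) ^ ((1:ℝ)/2)) ≤ a i + a j := by
    intro i _ j _
    have h := two_mul_le_sq ((a i) ^ ((1:ℝ)/2)) ((a j) ^ ((1:ℝ)/2))
    have e : ∀ z : ℝ≥0∞, (z ^ ((1:ℝ)/2)) ^ 2 = z := by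
      intro z
      rw [← ENNReal.rpow_natCast (z ^ ((1:ℝ)/2)) 2, ← ENNReal.rpow_mul]
      norm_num
    rwa [e, e] at h
  have h2 : (2:ℝ≥0∞) * (∑ i ∈ s, (a i) ^ ((1:ℝ)/2)) ^ 2
      ≤ 2 * ((s.card : ℝ≥0∞) * ∑ i ∈ s, a i) := by
    calc (2:ℝ≥0∞) * (∑ i ∈ s, (a i) ^ ((1:ℝ)/2)) ^ 2
        = ∑ i ∈ s, ∑ j ∈ s, 2 * ((a i) ^ ((1:ℝ)/2) * (a j) ^ ((1:ℝ)/2)) := by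
          rw [pow_two, Finset.sum_mul_sum, Finset.mul_sum]
          simp_rw [Finset.mul_sum]
      _ ≤ ∑ i ∈ s, ∑ j ∈ s, (a i + a j) := by
          exact Finset.sum_le_sum fun i hi => Finset.sum_le_sum fun j hj => key i hi j hj
      _ = 2 * ((s.card : ℝ≥0∞) * ∑ i ∈ s, a i) := by
          simp_rw [Finset.sum_add_distrib, Finset.sum_const, nsmul_eq_mul]
          rw [← Finset.mul_sum]
          ring
  exact (ENNReal.mul_le_mul_iff_right (by norm_num) (by norm_num)).mp h2


variable {Ω : Type*} [MeasurableSpace Ω] (P : Measure Ω) [IsProbabilityMeasure P]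
  {n : ℕ} {S : Set Ω}

lemma emp_apply (hS : MeasurableSet S) (x : Fin n → Ω) :
    empiricalMeasure n x S = (n : ℝ≥0∞)⁻¹ * ∑ i, S.indicator 1 (x i) := by
  simp [empiricalMeasure, Measure.smul_apply, Measure.finset_sum_apply,
    Measure.dirac_apply' _ hS, smul_eq_mul]


lemma pi_eval_one (i : Fin n) (hS : MeasurableSet S) :
    (Measure.pi fun _ : Fin n => P) (Function.eval i ⁻¹' S) = P S := by
  classical
  have h : Function.eval i ⁻¹' S = Set.pi Set.univ (fun k => if k = i then S else Set.univ) := by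
    ext x
    simp only [Set.mem_preimage, Set.mem_pi, Set.mem_univ, forall_true_left]
    constructor
    · intro hx k; split <;> simp_all [Function.eval]
    · intro hx; have := hx i; simpa [Function.eval] using this
  rw [h, Measure.pi_pi]
  have e : ∀ k : Fin n, P (if k = i then S else Set.univ) = if k = i then P S else 1 := by
    intro k; split_ifs <;> simp
  simp_rw [e]
  rw [Finset.prod_ite_eq' Finset.univ i (fun _ => P S)]
  simp


lemma pi_eval_two (hS : MeasurableSet S) (i j : Fin n) (hij : i ≠ j) :
    (Measure.pi fun _ : Fin n => P) (Function.eval i ⁻¹' S ∩ Function.eval j ⁻¹' S)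
      = P S * P S := by
  classical
  have h : Function.eval i ⁻¹' S ∩ Function.eval j ⁻¹' S
      = Set.pi Set.univ (fun k => if k = i then S else if k = j then S else Set.univ) := by
    ext x
    simp only [Set.mem_inter_iff, Set.mem_preimage, Set.mem_pi, Set.mem_univ, forall_true_left]
    constructor
    · rintro ⟨h1, h2⟩ k
      split
      · subst ‹k = i›; exact h1
      · split
        · subst ‹k = j›; exact h2
        · trivial
    · intro hx
      refine ⟨?_, ?_⟩
      · have := hx i; simpa [Function.eval] using this
      · have := hx j; simpa [Function.eval, hij.symm] using this
  rw [h, Measure.pi_pi]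
  have : ∀ k : Fin n, P (if k = i then S else if k = j then S else Set.univ)
      = if k = i then P S else if k = j then P S else 1 := by
    intro k; split_ifs <;> simp
  simp_rw [this]
  rw [← Finset.prod_subset (Finset.subset_univ {i, j})
    (by intro k _ hk; simp at hk; simp [hk.1, hk.2])]
  rw [Finset.prod_pair hij]
  simp [hij]


lemma g_meas (hS : MeasurableSet S) (i : Fin n) :
    Measurable fun x : Fin n → Ω => S.indicator (1 : Ω → ℝ≥0∞) (x i) :=
  (measurable_one.indicator hS).comp (measurable_pi_apply i)

lemma lintegral_g (hS : MeasurableSet S) (i : Fin n) :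
    ∫⁻ x, S.indicator (1 : Ω → ℝ≥0∞) (x i) ∂(Measure.pi fun _ : Fin n => P) = P S := by
  have h : (fun x : Fin n → Ω => S.indicator (1 : Ω → ℝ≥0∞) (x i))
      = fun x => (Function.eval i ⁻¹' S).indicator (1 : (Fin n → Ω) → ℝ≥0∞) x := by
    funext x
    by_cases hx : x i ∈ S <;> simp [Set.indicator, Set.mem_preimage, Function.eval, hx]
  simp_rw [h]
  rw [lintegral_indicator_one (hS.preimage (measurable_pi_apply i)), pi_eval_one P i hS]

lemma lintegral_gg (hS : MeasurableSet S) (i j : Fin n) :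
    ∫⁻ x, S.indicator (1 : Ω → ℝ≥0∞) (x i) * S.indicator (1 : Ω → ℝ≥0∞) (x j)
      ∂(Measure.pi fun _ : Fin n => P) ≤ if i = j then P S else P S * P S := by
  have h : (fun x : Fin n → Ω => S.indicator (1:Ω→ℝ≥0∞) (x i) * S.indicator (1:Ω→ℝ≥0∞) (x j))
      = fun x => (Function.eval i ⁻¹' S ∩ Function.eval j ⁻¹' S).indicator
          (1 : (Fin n → Ω) → ℝ≥0∞) x := by
    funext x
    by_cases h1 : x i ∈ S <;> by_cases h2 : x j ∈ S <;>
      simp [Set.indicator, Set.mem_preimage, Function.eval, h1, h2]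
  simp_rw [h]
  rw [lintegral_indicator_one
    ((hS.preimage (measurable_pi_apply i)).inter (hS.preimage (measurable_pi_apply j)))]
  split_ifs with hij
  · subst hij
    simp only [Set.inter_self]
    exact le_of_eq (pi_eval_one P i hS)
  · exact le_of_eq (pi_eval_two P hS i j hij)

lemma lintegral_emp (hn : 0 < n) (hS : MeasurableSet S) :
    ∫⁻ x, (n : ℝ≥0∞)⁻¹ * ∑ i, S.indicator (1 : Ω → ℝ≥0∞) (x i)
      ∂(Measure.pi fun _ : Fin n => P) = P S := by
  rw [lintegral_const_mul _ (Finset.measurable_sum _ fun i _ => g_meas hS i),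
    lintegral_finset_sum _ fun i _ => g_meas hS i]
  simp_rw [lintegral_g P hS]
  rw [Finset.sum_const, Finset.card_univ, Fintype.card_fin, nsmul_eq_mul,
    ← mul_assoc, ENNReal.inv_mul_cancel (by exact_mod_cast hn.ne') (by simp), one_mul]

lemma lintegral_emp_sq (hn : 0 < n) (hS : MeasurableSet S) :
    ∫⁻ x, ((n : ℝ≥0∞)⁻¹ * ∑ i, S.indicator (1 : Ω → ℝ≥0∞) (x i)) ^ 2
      ∂(Measure.pi fun _ : Fin n => P) ≤ P S / n + P S ^ 2 := by
  have hmeas : ∀ i : Fin n, ∀ j : Fin n, Measurable fun x : Fin n → Ω =>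
      S.indicator (1:Ω→ℝ≥0∞) (x i) * S.indicator (1:Ω→ℝ≥0∞) (x j) :=
    fun i j => (g_meas hS i).mul (g_meas hS j)
  have hexp : ∀ x : Fin n → Ω, ((n : ℝ≥0∞)⁻¹ * ∑ i, S.indicator (1:Ω→ℝ≥0∞) (x i)) ^ 2
      = (n : ℝ≥0∞)⁻¹ ^ 2 * ∑ i : Fin n, ∑ j : Fin n,
        S.indicator (1:Ω→ℝ≥0∞) (x i) * S.indicator (1:Ω→ℝ≥0∞) (x j) := by
    intro x
    rw [mul_pow, pow_two (∑ i, S.indicator (1:Ω→ℝ≥0∞) (x i)), Finset.sum_mul_sum]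
  simp_rw [hexp]
  rw [lintegral_const_mul _ (Finset.measurable_sum _ fun i _ =>
    Finset.measurable_sum _ fun j _ => hmeas i j)]
  rw [lintegral_finset_sum _ fun i _ => Finset.measurable_sum _ fun j _ => hmeas i j]
  have hsum : ∑ i : Fin n, ∫⁻ x, ∑ j : Fin n,
      S.indicator (1:Ω→ℝ≥0∞) (x i) * S.indicator (1:Ω→ℝ≥0∞) (x j)
        ∂(Measure.pi fun _ : Fin n => P) ≤ (n : ℝ≥0∞) * (P S + n * P S ^ 2) := by
    calc ∑ i : Fin n, ∫⁻ x, ∑ j : Fin n, S.indicator (1:Ω→ℝ≥0∞) (x i) *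
          S.indicator (1:Ω→ℝ≥0∞) (x j) ∂(Measure.pi fun _ : Fin n => P)
        = ∑ i : Fin n, ∑ j : Fin n, ∫⁻ x, S.indicator (1:Ω→ℝ≥0∞) (x i) *
          S.indicator (1:Ω→ℝ≥0∞) (x j) ∂(Measure.pi fun _ : Fin n => P) := by
          refine Finset.sum_congr rfl fun i _ => ?_
          exact lintegral_finset_sum _ fun j _ => hmeas i j
      _ ≤ ∑ _i : Fin n, (P S + n * P S ^ 2) := by
          refine Finset.sum_le_sum fun i _ => ?_
          calc ∑ j : Fin n, ∫⁻ x, S.indicator (1:Ω→ℝ≥0∞) (x i) *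
                S.indicator (1:Ω→ℝ≥0∞) (x j) ∂(Measure.pi fun _ : Fin n => P)
              ≤ ∑ j : Fin n, (if i = j then P S else P S * P S) :=
                Finset.sum_le_sum fun j _ => lintegral_gg P hS i j
            _ ≤ P S + n * P S ^ 2 := by
                have hterm : ∀ j : Fin n, (if i = j then P S else P S * P S)
                    ≤ (if i = j then P S else 0) + P S ^ 2 := by
                  intro j; split_ifs
                  · exact le_self_add
                  · rw [zero_add, pow_two]
                calc ∑ j : Fin n, (if i = j then P S else P S * P S)
                    ≤ ∑ j : Fin n, ((if i = j then P S else 0) + P S ^ 2) :=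
                      Finset.sum_le_sum fun j _ => hterm j
                  _ = P S + n * P S ^ 2 := by
                      rw [Finset.sum_add_distrib, Finset.sum_ite_eq Finset.univ i (fun _ => P S),
                        Finset.sum_const, Finset.card_univ, Fintype.card_fin, nsmul_eq_mul]
                      simp
      _ = (n : ℝ≥0∞) * (P S + n * P S ^ 2) := by
          rw [Finset.sum_const, Finset.card_univ, Fintype.card_fin, nsmul_eq_mul]
  calc (n : ℝ≥0∞)⁻¹ ^ 2 * ∑ i : Fin n, ∫⁻ x, ∑ j : Fin n,
        S.indicator (1:Ω→ℝ≥0∞) (x i) * S.indicator (1:Ω→ℝ≥0∞) (x j)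
        ∂(Measure.pi fun _ : Fin n => P)
      ≤ (n : ℝ≥0∞)⁻¹ ^ 2 * ((n : ℝ≥0∞) * (P S + n * P S ^ 2)) := by gcongr
    _ = P S / n + P S ^ 2 := by
        have h1 : (n : ℝ≥0∞)⁻¹ * n = 1 :=
          ENNReal.inv_mul_cancel (by exact_mod_cast hn.ne') (by simp)
        rw [div_eq_mul_inv]
        calc (n : ℝ≥0∞)⁻¹ ^ 2 * ((n : ℝ≥0∞) * (P S + n * P S ^ 2))
            = ((n : ℝ≥0∞)⁻¹ * n) * (P S * (n:ℝ≥0∞)⁻¹)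
              + ((n : ℝ≥0∞)⁻¹ * n) * (((n : ℝ≥0∞)⁻¹ * n) * P S ^ 2) := by ring
          _ = P S * (n:ℝ≥0∞)⁻¹ + P S ^ 2 := by rw [h1]; ring

lemma perS_cs (hn : 0 < n) (hS : MeasurableSet S) :
    ∫⁻ x, ennrDiff (P S) ((n : ℝ≥0∞)⁻¹ * ∑ i, S.indicator (1 : Ω → ℝ≥0∞) (x i))
      ∂(Measure.pi fun _ : Fin n => P) ≤ (P S / n) ^ ((1:ℝ)/2) := by
  set μ := (Measure.pi fun _ : Fin n => P) with hμ
  set F : (Fin n → Ω) → ℝ≥0∞ := fun x => (n : ℝ≥0∞)⁻¹ * ∑ i, S.indicator (1 : Ω → ℝ≥0∞) (x i)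
    with hF
  have hFmeas : Measurable F :=
    measurable_const.mul (Finset.measurable_sum _ fun i _ => g_meas hS i)
  have hFint : ∫⁻ x, F x ∂μ = P S := lintegral_emp P hn hS
  have hFtop : ∀ x, F x ≠ ⊤ := by
    intro x
    refine ne_top_of_le_ne_top (by simp : ((n:ℝ≥0∞)⁻¹ * n) ≠ ⊤) ?_
    refine mul_le_mul_right ?_ _
    calc ∑ i, S.indicator (1 : Ω → ℝ≥0∞) (x i) ≤ ∑ _i : Fin n, 1 :=
          Finset.sum_le_sum fun i _ => Set.indicator_le_self' (by simp) (x i)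
      _ = n := by simp
  have hDmeas : Measurable fun x => ennrDiff (P S) (F x) := by
    unfold ennrDiff
    exact (measurable_const.sub hFmeas).add (hFmeas.sub measurable_const)
  -- second moment bound
  have hM2 : ∫⁻ x, ennrDiff (P S) (F x) ^ 2 ∂μ ≤ P S / n := by
    have hpt : ∀ x, ennrDiff (P S) (F x) ^ 2
        ≤ (P S ^ 2 + F x ^ 2) - (2 * P S) * F x := fun x =>
      ENNReal.le_sub_of_add_le_right
        (ENNReal.mul_ne_top (ENNReal.mul_ne_top (by simp) (measure_ne_top P S)) (hFtop x))
        (by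
          have := ennrDiff_sq (P S) (F x) (measure_ne_top P S) (hFtop x)
          rwa [mul_assoc] )
    have hsubint : ∫⁻ x, (2 * P S) * F x ∂μ = 2 * P S * P S := by
      rw [lintegral_const_mul _ hFmeas, hFint]
    calc ∫⁻ x, ennrDiff (P S) (F x) ^ 2 ∂μ
        ≤ ∫⁻ x, ((P S ^ 2 + F x ^ 2) - (2 * P S) * F x) ∂μ := lintegral_mono hpt
      _ = (∫⁻ x, (P S ^ 2 + F x ^ 2) ∂μ) - ∫⁻ x, (2 * P S) * F x ∂μ := by
          refine lintegral_sub (measurable_const.mul hFmeas) ?_ ?_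
          · rw [hsubint]
            exact ENNReal.mul_ne_top (ENNReal.mul_ne_top (by simp) (measure_ne_top P S))
              (measure_ne_top P S)
          · exact Filter.Eventually.of_forall fun x => by
              dsimp only; rw [mul_assoc]; exact two_mul_le_sq _ _
      _ = (P S ^ 2 + ∫⁻ x, F x ^ 2 ∂μ) - 2 * P S * P S := by
          rw [hsubint, lintegral_add_left measurable_const, lintegral_const,
            measure_univ, mul_one]
      _ ≤ (P S ^ 2 + (P S / n + P S ^ 2)) - 2 * P S * P S := by
          gcongr
          exact lintegral_emp_sq P hn hS
      _ ≤ P S / n := by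
          rw [tsub_le_iff_right]
          apply le_of_eq
          rw [pow_two]; ring
  -- Cauchy–Schwarz (Hölder with g = 1)
  have hCS : ∫⁻ x, ennrDiff (P S) (F x) ∂μ
      ≤ (∫⁻ x, ennrDiff (P S) (F x) ^ 2 ∂μ) ^ ((1:ℝ)/2) := by
    have hpq : Real.HolderConjugate 2 2 := Real.holderConjugate_iff.mpr ⟨one_lt_two, by norm_num⟩
    have h := ENNReal.lintegral_mul_le_Lp_mul_Lq μ hpq hDmeas.aemeasurable
      (aemeasurable_const (b := (1:ℝ≥0∞)))
    simp only [mul_one, ENNReal.one_rpow, lintegral_const, measure_univ] at h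
    calc ∫⁻ x, ennrDiff (P S) (F x) ∂μ
        ≤ (∫⁻ x, ennrDiff (P S) (F x) ^ (2:ℝ) ∂μ) ^ ((1:ℝ)/2) := by
          convert h using 3 <;> norm_num
      _ = (∫⁻ x, ennrDiff (P S) (F x) ^ 2 ∂μ) ^ ((1:ℝ)/2) := by
          congr 1
          refine lintegral_congr fun x => ?_
          rw [← ENNReal.rpow_natCast (ennrDiff (P S) (F x)) 2]
          norm_num
  exact hCS.trans (ENNReal.rpow_le_rpow hM2 (by norm_num))

lemma perS_two (hn : 0 < n) (hS : MeasurableSet S) :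
    ∫⁻ x, ennrDiff (P S) ((n : ℝ≥0∞)⁻¹ * ∑ i, S.indicator (1 : Ω → ℝ≥0∞) (x i))
      ∂(Measure.pi fun _ : Fin n => P) ≤ 2 * P S := by
  calc ∫⁻ x, ennrDiff (P S) ((n : ℝ≥0∞)⁻¹ * ∑ i, S.indicator (1 : Ω → ℝ≥0∞) (x i))
        ∂(Measure.pi fun _ : Fin n => P)
      ≤ ∫⁻ x, (P S + (n : ℝ≥0∞)⁻¹ * ∑ i, S.indicator (1 : Ω → ℝ≥0∞) (x i))
        ∂(Measure.pi fun _ : Fin n => P) :=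
        lintegral_mono fun x => add_le_add tsub_le_self tsub_le_self
    _ = P S + P S := by
        rw [lintegral_add_left measurable_const, lintegral_const, measure_univ, mul_one,
          lintegral_emp P hn hS]
    _ = 2 * P S := (two_mul _).symm

end StmtHelpers

/-- Expected total deviation of the empirical measure over a finite Borel partition of a
Borel set `B`. -/
theorem stmt_18 {Ω : Type*} [MeasurableSpace Ω]
    (P : MeasureTheory.Measure Ω) [MeasureTheory.IsProbabilityMeasure P]
    (n : ℕ) (hn : 0 < n) (B : Set Ω) (hB : MeasurableSet B)
    (𝒮 : Finset (Set Ω)) (hmeas : ∀ S ∈ 𝒮, MeasurableSet S)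
    (hdisj : (𝒮 : Set (Set Ω)).PairwiseDisjoint id)
    (hunion : ⋃₀ (𝒮 : Set (Set Ω)) = B) :
    ∫⁻ x, ∑ S ∈ 𝒮, ennrDiff (P S) (empiricalMeasure n x S)
        ∂(MeasureTheory.Measure.pi fun _ : Fin n => P)
      ≤ min (2 * P B) ((P B * 𝒮.card / n) ^ ((1 : ℝ) / 2)) := by
  have hPB : ∑ S ∈ 𝒮, P S = P B := by
    rw [← hunion, Set.sUnion_eq_biUnion]
    rw [show (⋃ S ∈ (𝒮 : Set (Set Ω)), S) = ⋃ S ∈ 𝒮, (id S : Set Ω) by simp]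
    exact (measure_biUnion_finset hdisj fun S hS => hmeas S hS).symm
  have hsplit : ∫⁻ x, ∑ S ∈ 𝒮, ennrDiff (P S) (empiricalMeasure n x S)
      ∂(Measure.pi fun _ : Fin n => P)
      = ∑ S ∈ 𝒮, ∫⁻ x, ennrDiff (P S)
          ((n : ℝ≥0∞)⁻¹ * ∑ i, S.indicator (1 : Ω → ℝ≥0∞) (x i))
          ∂(Measure.pi fun _ : Fin n => P) := by
    have hcong : ∀ x : Fin n → Ω, ∑ S ∈ 𝒮, ennrDiff (P S) (empiricalMeasure n x S)
        = ∑ S ∈ 𝒮, ennrDiff (P S) ((n : ℝ≥0∞)⁻¹ * ∑ i, S.indicator (1 : Ω → ℝ≥0∞) (x i)) := by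
      intro x
      refine Finset.sum_congr rfl fun S hS => ?_
      rw [emp_apply (hmeas S hS) x]
    simp_rw [hcong]
    refine lintegral_finset_sum _ fun S hS => ?_
    unfold ennrDiff
    have hFmeas : Measurable fun x : Fin n → Ω =>
        (n : ℝ≥0∞)⁻¹ * ∑ i, S.indicator (1 : Ω → ℝ≥0∞) (x i) :=
      measurable_const.mul (Finset.measurable_sum _ fun i _ => g_meas (hmeas S hS) i)
    exact (measurable_const.sub hFmeas).add (hFmeas.sub measurable_const)
  rw [hsplit]
  refine le_min ?_ ?_
  · calc ∑ S ∈ 𝒮, ∫⁻ x, ennrDiff (P S)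
          ((n : ℝ≥0∞)⁻¹ * ∑ i, S.indicator (1 : Ω → ℝ≥0∞) (x i))
          ∂(Measure.pi fun _ : Fin n => P)
        ≤ ∑ S ∈ 𝒮, 2 * P S :=
          Finset.sum_le_sum fun S hS => perS_two P hn (hmeas S hS)
      _ = 2 * P B := by rw [← Finset.mul_sum, hPB]
  · calc ∑ S ∈ 𝒮, ∫⁻ x, ennrDiff (P S)
          ((n : ℝ≥0∞)⁻¹ * ∑ i, S.indicator (1 : Ω → ℝ≥0∞) (x i))
          ∂(Measure.pi fun _ : Fin n => P)
        ≤ ∑ S ∈ 𝒮, (P S / n) ^ ((1:ℝ)/2) :=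
          Finset.sum_le_sum fun S hS => perS_cs P hn (hmeas S hS)
      _ ≤ ((𝒮.card : ℝ≥0∞) * ∑ S ∈ 𝒮, P S / n) ^ ((1:ℝ)/2) := sum_rpow_half_le _ _
      _ = (P B * 𝒮.card / n) ^ ((1 : ℝ) / 2) := by
          congr 1
          simp_rw [div_eq_mul_inv]
          rw [← Finset.sum_mul, hPB]
          ring
end
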